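/- arXiv:2312.16776 — 2 statements merged into one kernel-verified Lean document; each statement's English description precedes it below -/
import Mathlib

section
/- Let λ be a strict partition and let T be a shifted tableau of shape λ with entries in the positive integers such that every row of T is a hook word. Then T is a decomposition tableau if and only if there do not exist i ∈ [ℓ(λ)−1] and j,k ∈ [λ_{i+1}] for which one of the following holds: (a) T_{i,i} ≤ T_{i+1,i+k}, or j<k and T_{i,i+j} ≤ T_{i+1,i+k} ≤ T_{i+1,i+j}; (b) T_{i+1,i+k} < T_{i,i} < T_{i,i+k}, or j<k and T_{i+1,i+k} < T_{i,i+j} < T_{i,i+k}. -/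
open scoped Classical

/-! ## Shifted diagrams, hook words, decomposition tableaux -/

/-- A strict partition, given as its (strictly decreasing) list of positive parts. -/
def IsStrictPartition (lam : List ℕ) : Prop :=
  lam.Chain' (· > ·) ∧ ∀ p ∈ lam, 0 < p

/-- A partition (weakly decreasing list of positive parts). -/
def IsPartition (lam : List ℕ) : Prop :=
  lam.Chain' (· ≥ ·) ∧ ∀ p ∈ lam, 0 < p

/-- `(i, j)` (1-indexed row `i`, column `j`) is a box of the shifted diagram `SD_lam`. -/
def InSD (lam : List ℕ) (i j : ℕ) : Prop :=
  1 ≤ i ∧ i ≤ lam.length ∧ i ≤ j ∧ j < i + lam.getD (i - 1) 0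

/-- `(i, j)` is a box of the (unshifted) Young diagram of `lam`. -/
def InYD (lam : List ℕ) (i j : ℕ) : Prop :=
  1 ≤ i ∧ i ≤ lam.length ∧ 1 ≤ j ∧ j ≤ lam.getD (i - 1) 0

/-- The word given by row `i` (1-indexed) of a shifted tableau `T`, read left to right. -/
def rowWord (lam : List ℕ) (T : ℕ × ℕ → ℕ) (i : ℕ) : List ℕ :=
  (List.range (lam.getD (i - 1) 0)).map fun j => T (i, i + j)

/-- A hook word: a sequence of positive integers `w₁ ≥ ⋯ ≥ w_m < w_{m+1} < ⋯ < w_n`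
for some `m ∈ [n]`. -/
def IsHookWord (w : List ℕ) : Prop :=
  (∀ v ∈ w, 0 < v) ∧
  ∃ m, 1 ≤ m ∧ m ≤ w.length ∧
    (∀ j : ℕ, j + 1 < m → w.getD (j + 1) 0 ≤ w.getD j 0) ∧
    (∀ j : ℕ, m ≤ j + 1 → j + 1 < w.length → w.getD j 0 < w.getD (j + 1) 0)

/-- `r` is a hook subword of maximal length in `s`. -/
def IsMaxHookSubwordIn (r s : List ℕ) : Prop :=
  r.Sublist s ∧ IsHookWord r ∧
    ∀ t : List ℕ, t.Sublist s → IsHookWord t → t.length ≤ r.length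

/-- A (semistandard) decomposition tableau of shifted shape `lam`. -/
def IsDecompTab (lam : List ℕ) (T : ℕ × ℕ → ℕ) : Prop :=
  (∀ i, 1 ≤ i → i ≤ lam.length → IsHookWord (rowWord lam T i)) ∧
  (∀ i, 1 ≤ i → i + 1 ≤ lam.length →
    IsMaxHookSubwordIn (rowWord lam T i) (rowWord lam T (i + 1) ++ rowWord lam T i))

/-! ## Set-valued decomposition tableaux -/

/-- A set-valued decomposition tableau: boxes of `SD_lam` are filled by finite nonempty
sets of positive integers, all of whose distributions are decomposition tableaux. -/
def IsSetDecompTab (lam : List ℕ) (T : ℕ × ℕ → Finset ℕ) : Prop :=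
  (∀ i j, InSD lam i j → (T (i, j)).Nonempty ∧ 0 ∉ T (i, j)) ∧
  (∀ d : ℕ × ℕ → ℕ, (∀ i j, InSD lam i j → d (i, j) ∈ T (i, j)) → IsDecompTab lam d)

/-- Set-valued decomposition tableau whose every entry is contained in `{1, …, n}`. -/
def IsSetDecompTabN (n : ℕ) (lam : List ℕ) (T : ℕ × ℕ → Finset ℕ) : Prop :=
  IsSetDecompTab lam T ∧ ∀ i j, InSD lam i j → ∀ v ∈ T (i, j), v ≤ n

/-! ## Reverse row reading words -/

/-- The boxes of `SD_lam` in reverse row reading order: the first row read right to left,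
then the second row right to left, and so on. -/
def revrowBoxes (lam : List ℕ) : List (ℕ × ℕ) :=
  (List.range lam.length).flatMap fun r =>
    (List.range (lam.getD r 0)).reverse.map fun j => (r + 1, r + 1 + j)

/-- Position of a box in the reverse row reading order. -/
def boxIdx (lam : List ℕ) (b : ℕ × ℕ) : ℕ := (revrowBoxes lam).idxOf b

/-- The reverse row reading word of a set-valued tableau, with each letter labelled by
its box: entries within each box are listed in decreasing order. -/
def revrowEntries (lam : List ℕ) (T : ℕ × ℕ → Finset ℕ) : List ((ℕ × ℕ) × ℕ) :=
  (revrowBoxes lam).flatMap fun b => (((T b).sort (· ≤ ·)).reverse).map fun v => (b, v)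

/-- The reverse row reading word of a set-valued tableau. -/
def revrowWord (lam : List ℕ) (T : ℕ × ℕ → Finset ℕ) : List ℕ :=
  (revrowEntries lam T).map Prod.snd

/-- `wtSet lam T k` is the number of boxes of `T` whose entry contains `k`. -/
noncomputable def wtSet (lam : List ℕ) (T : ℕ × ℕ → Finset ℕ) (k : ℕ) : ℕ :=
  ((revrowBoxes lam).filter fun b => decide (k ∈ T b)).length

/-- `wtNum lam T k` is the number of boxes of an ordinary tableau `T` equal to `k`. -/
noncomputable def wtNum (lam : List ℕ) (T : ℕ × ℕ → ℕ) (k : ℕ) : ℕ :=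
  ((revrowBoxes lam).filter fun b => decide (T b = k)).length

/-! ## Parenthesis pairing: `i`-unpaired letters -/

/-- Number of unmatched `i+1`'s ( "(" ) after scanning `u` left to right,
where each `i` ( ")" ) cancels the most recent unmatched `i+1`. -/
def openCount (i : ℕ) (u : List ℕ) : ℕ :=
  u.foldl (fun acc a => if a = i + 1 then acc + 1 else if a = i then acc - 1 else acc) 0

/-- Number of unmatched `i`'s ( ")" ) after scanning `u` right to left,
where each `i+1` ( "(" ) cancels the nearest unmatched `i` to its right. -/
def closeCount (i : ℕ) (u : List ℕ) : ℕ :=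
  u.foldr (fun a acc => if a = i then acc + 1 else if a = i + 1 then acc - 1 else acc) 0

/-- Position `p` of `w` holds an `i`-unpaired letter equal to `i+1`. -/
def UnpairedHigh (i : ℕ) (w : List ℕ) (p : ℕ) : Prop :=
  p < w.length ∧ w.getD p 0 = i + 1 ∧ closeCount i (w.drop (p + 1)) = 0

/-- Position `p` of `w` holds an `i`-unpaired letter equal to `i`. -/
def UnpairedLow (i : ℕ) (w : List ℕ) (p : ℕ) : Prop :=
  p < w.length ∧ w.getD p 0 = i ∧ openCount i (w.take p) = 0

instance (i : ℕ) (w : List ℕ) (p : ℕ) : Decidable (UnpairedHigh i w p) := by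
  unfold UnpairedHigh; infer_instance

instance (i : ℕ) (w : List ℕ) (p : ℕ) : Decidable (UnpairedLow i w p) := by
  unfold UnpairedLow; infer_instance

/-- The number of `i`-unpaired letters equal to `i+1` in `w`. -/
def numUnpairedHigh (i : ℕ) (w : List ℕ) : ℕ :=
  ((List.range w.length).filter fun p => decide (UnpairedHigh i w p)).length

/-- The number of `i`-unpaired letters equal to `i` in `w`. -/
def numUnpairedLow (i : ℕ) (w : List ℕ) : ℕ :=
  ((List.range w.length).filter fun p => decide (UnpairedLow i w p)).length

/-! ## Iterated partial operators and string lengths -/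

/-- Iterate a partial operator, with the convention that `0` (i.e. `none`) is absorbing. -/
def iterOpt {α : Type*} (g : α → Option α) : ℕ → α → Option α
  | 0, a => some a
  | k + 1, a => (g a).bind (iterOpt g k)

/-- `m` is the exact string length `sup {k | g^k a ≠ 0}` of `a` under `g`. -/
def HasStringLen {α : Type*} (g : α → Option α) (a : α) (m : ℕ) : Prop :=
  iterOpt g m a ≠ none ∧ iterOpt g (m + 1) a = none

/-! ## The queer crystal operators on set-valued decomposition tableaux -/

/-- The raising crystal operator `e_i` on set-valued decomposition tableaux. -/
noncomputable def eCrystal (lam : List ℕ) (i : ℕ) (T : ℕ × ℕ → Finset ℕ) :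
    Option (ℕ × ℕ → Finset ℕ) :=
  if h : ∃ p, UnpairedHigh i (revrowWord lam T) p then
    let xy := ((revrowEntries lam T).getD (Nat.find h) ((0, 0), 0)).1
    let T1 := Function.update T xy (insert i ((T xy).erase (i + 1)))
    if IsSetDecompTab lam T1 then some T1
    else if _hab : ∃ m, m < boxIdx lam xy ∧ i ∈ T ((revrowBoxes lam).getD m (0, 0)) ∧
        i + 1 ∈ T ((revrowBoxes lam).getD m (0, 0)) then
      let m := Nat.findGreatest (fun m => m < boxIdx lam xy ∧
          i ∈ T ((revrowBoxes lam).getD m (0, 0)) ∧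
          i + 1 ∈ T ((revrowBoxes lam).getD m (0, 0))) (boxIdx lam xy)
      let ab := (revrowBoxes lam).getD m (0, 0)
      some (Function.update (Function.update T ab ((T ab).erase (i + 1))) xy
        (insert i (T xy)))
    else none
  else none

/-- The lowering crystal operator `f_i` on set-valued decomposition tableaux. -/
noncomputable def fCrystal (lam : List ℕ) (i : ℕ) (T : ℕ × ℕ → Finset ℕ) :
    Option (ℕ × ℕ → Finset ℕ) :=
  if _h : ∃ p, UnpairedLow i (revrowWord lam T) p then
    let p := Nat.findGreatest (fun p => UnpairedLow i (revrowWord lam T) p)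
      (revrowWord lam T).length
    let xy := ((revrowEntries lam T).getD p ((0, 0), 0)).1
    let T1 := Function.update T xy (insert (i + 1) ((T xy).erase i))
    if IsSetDecompTab lam T1 then some T1
    else if hab : ∃ m, boxIdx lam xy < m ∧ m < (revrowBoxes lam).length ∧
        i ∈ T ((revrowBoxes lam).getD m (0, 0)) ∧
        i + 1 ∈ T ((revrowBoxes lam).getD m (0, 0)) then
      let ab := (revrowBoxes lam).getD (Nat.find hab) (0, 0)
      some (Function.update (Function.update T ab ((T ab).erase i)) xy
        (insert (i + 1) (T xy)))
    else none
  else none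

/-- The queer raising operator `e_1̄` on set-valued decomposition tableaux. -/
noncomputable def eBarCrystal (lam : List ℕ) (T : ℕ × ℕ → Finset ℕ) :
    Option (ℕ × ℕ → Finset ℕ) :=
  if h : ∃ p, p < (revrowWord lam T).length ∧ (revrowWord lam T).getD p 0 = 2 ∧
      ∀ q < p, (revrowWord lam T).getD q 0 ≠ 1 then
    let xy := ((revrowEntries lam T).getD (Nat.find h) ((0, 0), 0)).1
    if 1 ∈ T xy then none
    else some (Function.update T xy (insert 1 ((T xy).erase 2)))
  else none

/-- The queer lowering operator `f_1̄` on set-valued decomposition tableaux. -/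
noncomputable def fBarCrystal (lam : List ℕ) (T : ℕ × ℕ → Finset ℕ) :
    Option (ℕ × ℕ → Finset ℕ) :=
  if h : ∃ p, p < (revrowWord lam T).length ∧ (revrowWord lam T).getD p 0 = 1 ∧
      ∀ q < p, (revrowWord lam T).getD q 0 ≠ 2 then
    let xy := ((revrowEntries lam T).getD (Nat.find h) ((0, 0), 0)).1
    some (Function.update T xy (insert 2 ((T xy).erase 1)))
  else none
/-! ## Multiset-valued decomposition tableaux -/

/-- A multiset-valued decomposition tableau in which only the entry `1` may repeat
within a box, all of whose distributions are decomposition tableaux. -/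
def IsMultisetDecompTab (lam : List ℕ) (T : ℕ × ℕ → Multiset ℕ) : Prop :=
  (∀ i j, InSD lam i j → T (i, j) ≠ 0 ∧ 0 ∉ T (i, j) ∧
      ∀ v : ℕ, v ≠ 1 → (T (i, j)).count v ≤ 1) ∧
  (∀ d : ℕ × ℕ → ℕ, (∀ i j, InSD lam i j → d (i, j) ∈ T (i, j)) → IsDecompTab lam d)

/-- Reverse row reading word of a multiset-valued tableau, with boxes recorded. -/
def revrowEntriesM (lam : List ℕ) (T : ℕ × ℕ → Multiset ℕ) : List ((ℕ × ℕ) × ℕ) :=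
  (revrowBoxes lam).flatMap fun b => (((T b).sort (· ≤ ·)).reverse).map fun v => (b, v)

/-- Reverse row reading word of a multiset-valued tableau. -/
def revrowWordM (lam : List ℕ) (T : ℕ × ℕ → Multiset ℕ) : List ℕ :=
  (revrowEntriesM lam T).map Prod.snd

/-- The operator `e*_1̄` on multiset-valued decomposition tableaux: if the first `2` of
the reverse row reading word occurs before every `1`, change it to a `1`. -/
noncomputable def eStarBar (lam : List ℕ) (T : ℕ × ℕ → Multiset ℕ) :
    Option (ℕ × ℕ → Multiset ℕ) :=
  if h : ∃ p, p < (revrowWordM lam T).length ∧ (revrowWordM lam T).getD p 0 = 2 ∧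
      ∀ q < p, (revrowWordM lam T).getD q 0 ≠ 1 then
    let b := ((revrowEntriesM lam T).getD (Nat.find h) ((0, 0), 0)).1
    some (Function.update T b (1 ::ₘ (T b).erase 2))
  else none

/-- The operator `f*_1̄` on multiset-valued decomposition tableaux: if the first `1` of
the reverse row reading word occurs before every `2`, change it to a `2`. -/
noncomputable def fStarBar (lam : List ℕ) (T : ℕ × ℕ → Multiset ℕ) :
    Option (ℕ × ℕ → Multiset ℕ) :=
  if h : ∃ p, p < (revrowWordM lam T).length ∧ (revrowWordM lam T).getD p 0 = 1 ∧
      ∀ q < p, (revrowWordM lam T).getD q 0 ≠ 2 then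
    let b := ((revrowEntriesM lam T).getD (Nat.find h) ((0, 0), 0)).1
    some (Function.update T b (2 ::ₘ (T b).erase 1))
  else none

/-! ## Linked `i`-words and square-root crystal operators -/

/-- Characters of a linked `i`-word: `(`, `)` and `-`. -/
inductive PChar : Type
  | op : PChar
  | cl : PChar
  | dash : PChar
  deriving DecidableEq

/-- The linked `i`-word of a set-valued tableau, with each character labelled by its box:
a box containing `i` but not `i+1` gives `)`, a box containing `i+1` but not `i` gives `(`,
and a box containing both gives `)-(`; boxes are read in reverse row reading order. -/
def tokens (lam : List ℕ) (i : ℕ) (T : ℕ × ℕ → Finset ℕ) : List (PChar × (ℕ × ℕ)) :=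
  (revrowBoxes lam).flatMap fun b =>
    if i ∈ T b ∧ i + 1 ∈ T b then [(PChar.cl, b), (PChar.dash, b), (PChar.op, b)]
    else if i ∈ T b then [(PChar.cl, b)]
    else if i + 1 ∈ T b then [(PChar.op, b)]
    else []

/-- Unmatched `(`s after scanning left to right (ignoring dashes). -/
def openCnt (u : List PChar) : ℕ :=
  u.foldl (fun acc a => match a with
    | PChar.op => acc + 1
    | PChar.cl => acc - 1
    | PChar.dash => acc) 0

/-- Unmatched `)`s after scanning right to left (ignoring dashes). -/
def closeCnt (u : List PChar) : ℕ :=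
  u.foldr (fun a acc => match a with
    | PChar.cl => acc + 1
    | PChar.op => acc - 1
    | PChar.dash => acc) 0

/-- Position `p` holds an unpaired `(`. -/
def UnpairedOp (ws : List PChar) (p : ℕ) : Prop :=
  p < ws.length ∧ ws.getD p PChar.dash = PChar.op ∧ closeCnt (ws.drop (p + 1)) = 0

/-- Position `p` holds an unpaired `)`. -/
def UnpairedCl (ws : List PChar) (p : ℕ) : Prop :=
  p < ws.length ∧ ws.getD p PChar.dash = PChar.cl ∧ openCnt (ws.take p) = 0

/-- A fully matched (balanced) parenthesis word, ignoring dashes. -/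
def BalancedP (u : List PChar) : Prop :=
  u.count PChar.op = u.count PChar.cl ∧
  ∀ k, (u.take k).count PChar.cl ≤ (u.take k).count PChar.op

/-- The `(` at position `a` is matched with the `)` at position `b`. -/
def MatchedPair (ws : List PChar) (a b : ℕ) : Prop :=
  a < b ∧ b < ws.length ∧ ws.getD a PChar.dash = PChar.op ∧
  ws.getD b PChar.dash = PChar.cl ∧ BalancedP ((ws.drop (a + 1)).take (b - (a + 1)))

/-- Generating relation for equivalence classes of characters: a matched pair together
with everything between them lies in one class, and so do the three characters `)-(`
coming from a single box. -/
def LinkRel (ws : List PChar) (p q : ℕ) : Prop :=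
  (∃ a b, MatchedPair ws a b ∧ a ≤ p ∧ p ≤ b ∧ a ≤ q ∧ q ≤ b) ∨
  (∃ d, 1 ≤ d ∧ d + 1 < ws.length ∧ ws.getD d PChar.op = PChar.dash ∧
    (p = d - 1 ∨ p = d ∨ p = d + 1) ∧ (q = d - 1 ∨ q = d ∨ q = d + 1))

/-- Two positions lie in the same equivalence class of the linked `i`-word. -/
def SameClass (ws : List PChar) : ℕ → ℕ → Prop := Relation.ReflTransGen (LinkRel ws)

/-- The class of position `p` contains an unpaired `(`. -/
def HasUnpairedOpIn (ws : List PChar) (p : ℕ) : Prop :=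
  ∃ q, SameClass ws p q ∧ UnpairedOp ws q

/-- The class of position `p` contains an unpaired `)`. -/
def HasUnpairedClIn (ws : List PChar) (p : ℕ) : Prop :=
  ∃ q, SameClass ws p q ∧ UnpairedCl ws q

/-- Position `p` belongs to a left form: a class with no unpaired `)` that ends
with an unpaired `(`. -/
def IsLeftFormAt (ws : List PChar) (p : ℕ) : Prop :=
  p < ws.length ∧ HasUnpairedOpIn ws p ∧ ¬ HasUnpairedClIn ws p

/-- Position `p` belongs to a right form: a class with no unpaired `(` that starts
with an unpaired `)`. -/
def IsRightFormAt (ws : List PChar) (p : ℕ) : Prop :=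
  p < ws.length ∧ HasUnpairedClIn ws p ∧ ¬ HasUnpairedOpIn ws p

/-- The square-root raising operator `e'_i` on set-valued decomposition tableaux. -/
noncomputable def eSqrt (lam : List ℕ) (i : ℕ) (T : ℕ × ℕ → Finset ℕ) :
    Option (ℕ × ℕ → Finset ℕ) :=
  let tk := tokens lam i T
  let ws := tk.map Prod.fst
  if hc : ∃ p, UnpairedOp ws p ∧ HasUnpairedClIn ws p then
    -- the `)-(` at the end of the combined form: remove `i+1` from its box
    let b := (tk.getD (Nat.find hc) (PChar.op, (0, 0))).2
    some (Function.update T b ((T b).erase (i + 1)))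
  else if hl : ∃ p, IsLeftFormAt ws p then
    -- the `(` at the start of the first left form: add `i` to its box
    let b := (tk.getD (Nat.find hl) (PChar.op, (0, 0))).2
    some (Function.update T b (insert i (T b)))
  else none

/-- The square-root lowering operator `f'_i` on set-valued decomposition tableaux. -/
noncomputable def fSqrt (lam : List ℕ) (i : ℕ) (T : ℕ × ℕ → Finset ℕ) :
    Option (ℕ × ℕ → Finset ℕ) :=
  let tk := tokens lam i T
  let ws := tk.map Prod.fst
  if hc : ∃ p, UnpairedCl ws p ∧ HasUnpairedOpIn ws p then
    -- the `)-(` at the beginning of the combined form: remove `i` from its box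
    let b := (tk.getD (Nat.find hc) (PChar.op, (0, 0))).2
    some (Function.update T b ((T b).erase i))
  else if _hr : ∃ p, IsRightFormAt ws p then
    -- the `)` at the end of the last right form: add `i+1` to its box
    let b := (tk.getD (Nat.findGreatest (fun p => IsRightFormAt ws p) ws.length)
        (PChar.op, (0, 0))).2
    some (Function.update T b (insert (i + 1) (T b)))
  else none

/-- The square-root queer raising operator `e'_1̄`. -/
noncomputable def eBarSqrt (lam : List ℕ) (T : ℕ × ℕ → Finset ℕ) :
    Option (ℕ × ℕ → Finset ℕ) :=
  if h : ∃ m, m < (revrowBoxes lam).length ∧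
      (1 ∈ T ((revrowBoxes lam).getD m (0, 0)) ∨ 2 ∈ T ((revrowBoxes lam).getD m (0, 0))) then
    let b := (revrowBoxes lam).getD (Nat.find h) (0, 0)
    if 1 ∈ T b then
      if 2 ∈ T b then some (Function.update T b ((T b).erase 2)) else none
    else some (Function.update T b (insert 1 (T b)))
  else none

/-- The square-root queer lowering operator `f'_1̄`. -/
noncomputable def fBarSqrt (lam : List ℕ) (T : ℕ × ℕ → Finset ℕ) :
    Option (ℕ × ℕ → Finset ℕ) :=
  if h : ∃ m, m < (revrowBoxes lam).length ∧
      (1 ∈ T ((revrowBoxes lam).getD m (0, 0)) ∨ 2 ∈ T ((revrowBoxes lam).getD m (0, 0))) then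
    let b := (revrowBoxes lam).getD (Nat.find h) (0, 0)
    if 2 ∈ T b then
      if 1 ∈ T b then some (Function.update T b ((T b).erase 1)) else none
    else some (Function.update T b (insert 2 (T b)))
  else none
/-! ## Abstract √gl_n- and √q_n-crystals -/

/-- The data of a crystal-like structure: a weight map (coordinates `1, …, n` are the
relevant ones) and partial raising/lowering operators indexed by `i ∈ [n-1]`. -/
structure SqGlData (B : Type*) where
  wt : B → ℕ → ℕ
  e : ℕ → B → Option B
  f : ℕ → B → Option B

/-- The axioms of a `√gl_n`-crystal. -/
def IsSqGlCrystal {B : Type*} (n : ℕ) (D : SqGlData B) : Prop :=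
  (∀ i, 1 ≤ i → i < n → ∀ b, ∃ ep ph : ℕ,
      HasStringLen (D.e i) b ep ∧ HasStringLen (D.f i) b ph ∧
      Even (ep + ph) ∧ (ph : ℤ) - ep = 2 * ((D.wt b i : ℤ) - D.wt b (i + 1))) ∧
  (∀ i, 1 ≤ i → i < n → ∀ b c, D.e i b = some c ↔ D.f i c = some b) ∧
  (∀ i, 1 ≤ i → i < n → ∀ b c, D.e i b = some c → ∀ ep, HasStringLen (D.e i) b ep →
      ∀ k, (D.wt c k : ℤ) - D.wt b k =
        if Even ep then (if k = i then 1 else 0) else (if k = i + 1 then -1 else 0))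

/-- The data of a queer crystal-like structure. -/
structure SqQData (B : Type*) extends SqGlData B where
  ebar : B → Option B
  fbar : B → Option B

/-- The axioms of a `√q_n`-crystal. -/
def IsSqQnCrystal {B : Type*} (n : ℕ) (D : SqQData B) : Prop :=
  IsSqGlCrystal n D.toSqGlData ∧
  (∀ i, 3 ≤ i → i < n → ∀ b,
      (D.e i b).bind D.ebar = (D.ebar b).bind (D.e i) ∧
      (D.f i b).bind D.ebar = (D.ebar b).bind (D.f i) ∧
      (D.e i b).bind D.fbar = (D.fbar b).bind (D.e i) ∧
      (D.f i b).bind D.fbar = (D.fbar b).bind (D.f i)) ∧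
  (∀ i, 3 ≤ i → i < n → ∀ b c, (D.ebar b = some c ∨ D.fbar b = some c) →
      (∀ m, HasStringLen (D.e i) b m ↔ HasStringLen (D.e i) c m) ∧
      (∀ m, HasStringLen (D.f i) b m ↔ HasStringLen (D.f i) c m)) ∧
  (∀ b, ∃ ep ph : ℕ, HasStringLen D.ebar b ep ∧ HasStringLen D.fbar b ph ∧
      ep + ph = (if D.wt b 1 = 0 ∧ D.wt b 2 = 0 then 0 else 2)) ∧
  (∀ b c, D.ebar b = some c ↔ D.fbar c = some b) ∧
  (∀ b c, D.ebar b = some c → ∀ ep, HasStringLen D.ebar b ep →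
      ∀ k, (D.wt c k : ℤ) - D.wt b k =
        if ep = 2 then (if k = 1 then 1 else 0) else (if k = 2 then -1 else 0))

/-- The square of a partial operator. -/
def sqOp {B : Type*} (g : B → Option B) : B → Option B := fun b => (g b).bind g

/-- The axioms of a (seminormal) `gl_n`-crystal for given weight map and operators. -/
def GlSeminormalAxioms {B : Type*} (n : ℕ) (wt : B → ℕ → ℕ)
    (E F : ℕ → B → Option B) : Prop :=
  (∀ i, 1 ≤ i → i < n → ∀ b c, E i b = some c ↔ F i c = some b) ∧
  (∀ i, 1 ≤ i → i < n → ∀ b c, E i b = some c →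
      ∀ k, (wt c k : ℤ) - wt b k = (if k = i then 1 else 0) - (if k = i + 1 then 1 else 0)) ∧
  (∀ i, 1 ≤ i → i < n → ∀ b, ∃ ep ph : ℕ,
      HasStringLen (E i) b ep ∧ HasStringLen (F i) b ph ∧
      (ph : ℤ) - ep = (wt b i : ℤ) - wt b (i + 1))

/-- The additional axioms making a `gl_n`-crystal into a `q_n`-crystal. -/
def QnExtraAxioms {B : Type*} (n : ℕ) (wt : B → ℕ → ℕ)
    (E F : ℕ → B → Option B) (Eb Fb : B → Option B) : Prop :=
  (∀ i, 3 ≤ i → i < n → ∀ b,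
      (E i b).bind Eb = (Eb b).bind (E i) ∧ (F i b).bind Eb = (Eb b).bind (F i) ∧
      (E i b).bind Fb = (Fb b).bind (E i) ∧ (F i b).bind Fb = (Fb b).bind (F i)) ∧
  (∀ i, 3 ≤ i → i < n → ∀ b c, (Eb b = some c ∨ Fb b = some c) →
      (∀ m, HasStringLen (E i) b m ↔ HasStringLen (E i) c m) ∧
      (∀ m, HasStringLen (F i) b m ↔ HasStringLen (F i) c m)) ∧
  (∀ b c, Eb b = some c ↔ Fb c = some b) ∧
  (∀ b c, Eb b = some c →
      ∀ k, (wt c k : ℤ) - wt b k = (if k = 1 then 1 else 0) - (if k = 2 then 1 else 0))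

/-- String length as a function (the supremum of the set of iterates that survive). -/
noncomputable def strLen {B : Type*} (g : B → Option B) (b : B) : ℕ :=
  sSup {k | iterOpt g k b ≠ none}

/-- Tensor product of `√gl_n`-crystal data. -/
noncomputable def tensorGl {B C : Type*} (DB : SqGlData B) (DC : SqGlData C) :
    SqGlData (B × C) where
  wt := fun bc k => DB.wt bc.1 k + DC.wt bc.2 k
  e := fun i bc =>
    if strLen (DB.e i) bc.1 ≤ strLen (DC.f i) bc.2 then
      (DC.e i bc.2).map fun c' => (bc.1, c')
    else (DB.e i bc.1).map fun b' => (b', bc.2)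
  f := fun i bc =>
    if strLen (DB.e i) bc.1 < strLen (DC.f i) bc.2 then
      (DC.f i bc.2).map fun c' => (bc.1, c')
    else (DB.f i bc.1).map fun b' => (b', bc.2)

/-- Tensor product of `√q_n`-crystal data. -/
noncomputable def tensorQ {B C : Type*} (DB : SqQData B) (DC : SqQData C) :
    SqQData (B × C) where
  toSqGlData := tensorGl DB.toSqGlData DC.toSqGlData
  ebar := fun bc =>
    if DB.wt bc.1 1 = 0 ∧ DB.wt bc.1 2 = 0 then (DC.ebar bc.2).map fun c' => (bc.1, c')
    else (DB.ebar bc.1).map fun b' => (b', bc.2)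
  fbar := fun bc =>
    if DB.wt bc.1 1 = 0 ∧ DB.wt bc.1 2 = 0 then (DC.fbar bc.2).map fun c' => (bc.1, c')
    else (DB.fbar bc.1).map fun b' => (b', bc.2)
/-! ## Generating functions -/

/-- A set-valued decomposition tableau, normalized to be empty off the shifted diagram. -/
def IsNormalizedSVDT (lam : List ℕ) (T : ℕ × ℕ → Finset ℕ) : Prop :=
  IsSetDecompTab lam T ∧ ∀ i j, ¬ InSD lam i j → T (i, j) = ∅

/-- A decomposition tableau, normalized to be `0` off the shifted diagram. -/
def IsNormalizedDT (lam : List ℕ) (T : ℕ × ℕ → ℕ) : Prop :=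
  IsDecompTab lam T ∧ ∀ i j, ¬ InSD lam i j → T (i, j) = 0

/-- `Σ_λ = ∑_{T ∈ SetDecTab(λ)} x^T` as a formal power series; variable `k` stands for
`x_{k+1}`, i.e. records occurrences of the letter `k+1`. -/
noncomputable def SigmaLam (lam : List ℕ) : MvPowerSeries ℕ ℤ :=
  fun d => (Set.ncard
    {T : ℕ × ℕ → Finset ℕ | IsNormalizedSVDT lam T ∧ ∀ k, wtSet lam T (k + 1) = d k} : ℤ)

/-- The Schur `P`-function `P_λ = ∑_{T ∈ DecTab(λ)} x^T` as a formal power series. -/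
noncomputable def SchurPfun (lam : List ℕ) : MvPowerSeries ℕ ℤ :=
  fun d => (Set.ncard
    {T : ℕ × ℕ → ℕ | IsNormalizedDT lam T ∧ ∀ k, wtNum lam T (k + 1) = d k} : ℤ)

/-! ## Marked (primed) shifted tableaux and `GP`-functions.
We encode the marked alphabet `1' < 1 < 2' < 2 < ⋯` into `ℕ` by `k' ↦ 2k - 1` and
`k ↦ 2k`, so primed letters are odd and the natural order is preserved. -/

/-- A semistandard marked shifted tableau (as a distribution): weakly increasing rows and
columns, no primed (odd) letter repeated in a row, no unprimed (even) letter repeated in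
a column. -/
def IsSemistandardMarked (lam : List ℕ) (d : ℕ × ℕ → ℕ) : Prop :=
  (∀ i j, InSD lam i j → InSD lam i (j + 1) → d (i, j) ≤ d (i, j + 1)) ∧
  (∀ i j, InSD lam i j → InSD lam (i + 1) j → d (i, j) ≤ d (i + 1, j)) ∧
  (∀ i j j', InSD lam i j → InSD lam i j' → j < j' → d (i, j) = d (i, j') →
    Even (d (i, j))) ∧
  (∀ i i' j, InSD lam i j → InSD lam i' j → i < i' → d (i, j) = d (i', j) →
    Odd (d (i, j)))

/-- A semistandard set-valued shifted tableau in the marked alphabet, with no primed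
letters on the main diagonal. -/
def IsSetSSMarkedShifted (lam : List ℕ) (T : ℕ × ℕ → Finset ℕ) : Prop :=
  (∀ i j, InSD lam i j → (T (i, j)).Nonempty ∧ ∀ v ∈ T (i, j), 1 ≤ v) ∧
  (∀ i, InSD lam i i → ∀ v ∈ T (i, i), Even v) ∧
  (∀ d : ℕ × ℕ → ℕ, (∀ i j, InSD lam i j → d (i, j) ∈ T (i, j)) →
    IsSemistandardMarked lam d)

/-- `wtMarked lam T k` is the total number of occurrences of `k` or `k'` in `T`. -/
noncomputable def wtMarked (lam : List ℕ) (T : ℕ × ℕ → Finset ℕ) (k : ℕ) : ℕ :=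
  ((revrowBoxes lam).map fun b =>
    ((T b).filter fun v => v = 2 * k - 1 ∨ v = 2 * k).card).sum

/-- The K-theoretic Schur `P`-function `GP_λ` as a formal power series; variable `k`
stands for `x_{k+1}`. -/
noncomputable def GPfun (lam : List ℕ) : MvPowerSeries ℕ ℤ :=
  fun d => (Set.ncard
    {T : ℕ × ℕ → Finset ℕ | IsSetSSMarkedShifted lam T ∧
      (∀ i j, ¬ InSD lam i j → T (i, j) = ∅) ∧
      ∀ k, wtMarked lam T (k + 1) = d k} : ℤ)

/-! ## Polynomial versions (variables `x_1, …, x_n`, i.e. `X 1, …, X n`) -/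

/-- The boxes of the (unshifted) Young diagram of `lam`, listed row by row. -/
def YDboxes (lam : List ℕ) : List (ℕ × ℕ) :=
  (List.range lam.length).flatMap fun r =>
    (List.range (lam.getD r 0)).map fun j => (r + 1, j + 1)

/-- A semistandard (unshifted) Young tableau: rows weakly increase, columns strictly
increase. -/
def IsSemistandardYT (lam : List ℕ) (d : ℕ × ℕ → ℕ) : Prop :=
  (∀ i j, InYD lam i j → InYD lam i (j + 1) → d (i, j) ≤ d (i, j + 1)) ∧
  (∀ i j, InYD lam i j → InYD lam (i + 1) j → d (i, j) < d (i + 1, j))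

/-- A semistandard set-valued (unshifted) tableau with entries in `{1, …, n}`,
normalized off the diagram. -/
def IsSetSSYT (n : ℕ) (lam : List ℕ) (T : ℕ × ℕ → Finset ℕ) : Prop :=
  (∀ i j, InYD lam i j → (T (i, j)).Nonempty ∧ ∀ v ∈ T (i, j), 1 ≤ v ∧ v ≤ n) ∧
  (∀ i j, ¬ InYD lam i j → T (i, j) = ∅) ∧
  (∀ d : ℕ × ℕ → ℕ, (∀ i j, InYD lam i j → d (i, j) ∈ T (i, j)) → IsSemistandardYT lam d)

/-- The symmetric Grothendieck polynomial `G_λ(x_1, …, x_n)`. -/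
noncomputable def Gpoly (n : ℕ) (lam : List ℕ) : MvPolynomial ℕ ℤ :=
  ∑ᶠ T ∈ {T : ℕ × ℕ → Finset ℕ | IsSetSSYT n lam T},
    ((YDboxes lam).map fun b =>
      ∏ v ∈ T b, (MvPolynomial.X v : MvPolynomial ℕ ℤ)).prod

/-- A semistandard set-valued marked shifted tableau with letters at most `n`,
normalized off the diagram. -/
def IsSetSSMarkedShiftedN (n : ℕ) (lam : List ℕ) (T : ℕ × ℕ → Finset ℕ) : Prop :=
  IsSetSSMarkedShifted lam T ∧ (∀ i j, ¬ InSD lam i j → T (i, j) = ∅) ∧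
  ∀ i j, InSD lam i j → ∀ v ∈ T (i, j), v ≤ 2 * n

/-- The K-theoretic Schur `P`-polynomial `GP_λ(x_1, …, x_n)`. -/
noncomputable def GPpoly (n : ℕ) (lam : List ℕ) : MvPolynomial ℕ ℤ :=
  ∑ᶠ T ∈ {T : ℕ × ℕ → Finset ℕ | IsSetSSMarkedShiftedN n lam T},
    ((revrowBoxes lam).map fun b =>
      ∏ v ∈ T b, (MvPolynomial.X ((v + 1) / 2) : MvPolynomial ℕ ℤ)).prod

/-- The character of the `m`-th tensor power of the standard `√q_n`-crystal, whose
elements are the nonempty subsets of `{1, …, n}` with weight the indicator vector. -/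
noncomputable def standardChar (n m : ℕ) : MvPolynomial ℕ ℤ :=
  ∑ b : Fin m → {S : Finset (Fin n) // S.Nonempty},
    ∏ j : Fin m, ∏ k ∈ (b j).1, (MvPolynomial.X ((k : ℕ) + 1) : MvPolynomial ℕ ℤ)

namespace HookAux

lemma getD_take' (l : List ℕ) {n c : ℕ} (h : c < n) (h2 : n ≤ l.length) :
    (l.take n).getD c 0 = l.getD c 0 := by
  have hc : c < (l.take n).length := by simp [List.length_take]; omega
  rw [List.getD_eq_getElem _ _ hc, List.getD_eq_getElem _ _ (by omega : c < l.length),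
    List.getElem_take]

lemma getD_drop' (l : List ℕ) {n c : ℕ} (h : n + c < l.length) :
    (l.drop n).getD c 0 = l.getD (n + c) 0 := by
  have hc : c < (l.drop n).length := by simp [List.length_drop]; omega
  rw [List.getD_eq_getElem _ _ hc, List.getD_eq_getElem _ _ h, List.getElem_drop]

lemma dec_le {w : List ℕ} {m : ℕ}
    (hdec : ∀ j : ℕ, j + 1 < m → w.getD (j + 1) 0 ≤ w.getD j 0)
    {a b : ℕ} (hab : a ≤ b) (hbm : b < m) : w.getD b 0 ≤ w.getD a 0 := by
  have aux : ∀ d a, a + d < m → w.getD (a + d) 0 ≤ w.getD a 0 := by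
    intro d
    induction d with
    | zero => intro a _; simp
    | succ d ih =>
      intro a h
      have h2 := hdec (a + d) (by omega)
      have h3 := ih a (by omega)
      have he : a + (d + 1) = (a + d) + 1 := by omega
      rw [he]
      exact le_trans h2 h3
  have he : b = a + (b - a) := by omega
  rw [he]
  exact aux _ _ (by omega)

lemma inc_lt {w : List ℕ} {m : ℕ}
    (hinc : ∀ j : ℕ, m ≤ j + 1 → j + 1 < w.length → w.getD j 0 < w.getD (j + 1) 0)
    {a b : ℕ} (hma : m ≤ a + 1) (hab : a < b) (hb : b < w.length) :
    w.getD a 0 < w.getD b 0 := by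
  have aux : ∀ d a, m ≤ a + 1 → a + d + 1 < w.length → w.getD a 0 < w.getD (a + d + 1) 0 := by
    intro d
    induction d with
    | zero => intro a h1 h2; exact hinc a h1 h2
    | succ d ih =>
      intro a h1 h2
      have h3 := ih a h1 (by omega)
      have h4 := hinc (a + d + 1) (by omega) (by omega)
      have he : a + (d + 1) + 1 = (a + d + 1) + 1 := by omega
      rw [he]
      exact lt_trans h3 h4
  have he : b = a + (b - a - 1) + 1 := by omega
  rw [he]
  exact aux _ _ hma (by omega)

lemma sublist_index {l' l : List ℕ} (h : l'.Sublist l) :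
    ∃ F : ℕ → ℕ,
      (∀ c, c < l'.length → F c < l.length ∧ l'.getD c 0 = l.getD (F c) 0) ∧
      (∀ c c', c < c' → c' < l'.length → F c < F c') := by
  obtain ⟨f, hf⟩ := List.sublist_iff_exists_fin_orderEmbedding_get_eq.mp h
  refine ⟨fun c => if hc : c < l'.length then (f ⟨c, hc⟩ : ℕ) else 0, ?_, ?_⟩
  · intro c hc
    simp only [dif_pos hc]
    refine ⟨(f ⟨c, hc⟩).isLt, ?_⟩
    rw [List.getD_eq_getElem _ _ hc, List.getD_eq_getElem _ _ (f ⟨c, hc⟩).isLt]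
    simpa [List.get_eq_getElem] using hf ⟨c, hc⟩
  · intro c c' hcc hc'
    have hc : c < l'.length := hcc.trans hc'
    simp only [dif_pos hc, dif_pos hc']
    exact_mod_cast f.strictMono (show (⟨c, hc⟩ : Fin l'.length) < ⟨c', hc'⟩ from hcc)

lemma mono_gap {F : ℕ → ℕ} {n : ℕ} (hm : ∀ c c', c < c' → c' < n → F c < F c') :
    ∀ a d, a + d < n → F a + d ≤ F (a + d) := by
  intro a d
  induction d with
  | zero => simp
  | succ d ih =>
    intro h
    have h1 := ih (by omega)
    have h2 := hm (a + d) (a + d + 1) (by omega) (by omega)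
    have he : a + (d + 1) = (a + d) + 1 := by omega
    rw [he]
    omega


lemma easyA {u v : List ℕ} (hu : IsHookWord u) (hv : IsHookWord v)
    (hlen : u.length < v.length) {j k0 : ℕ} (hjk : j ≤ k0) (hk : k0 < u.length)
    (h1 : v.getD j 0 ≤ u.getD k0 0)
    (h2 : 1 ≤ j → u.getD k0 0 ≤ u.getD (j - 1) 0) :
    ∃ t : List ℕ, t.Sublist (u ++ v) ∧ IsHookWord t ∧ t.length = v.length + 1 := by
  obtain ⟨hupos, mu, hmu1, hmu2, hdu, hiu⟩ := hu
  obtain ⟨hvpos, mv, hmv1, hmv2, hdv, hiv⟩ := hv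
  set x := u.getD k0 0 with hx
  set t := (u.take j ++ [x]) ++ v.drop j with hT
  have hju : j ≤ u.length := by omega
  have hjp : j ≤ v.length := by omega
  have hlt : (u.take j).length = j := by rw [List.length_take]; omega
  have hlleft : (u.take j ++ [x]).length = j + 1 := by simp [hlt]
  have hlent : t.length = v.length + 1 := by
    rw [hT, List.length_append, hlleft, List.length_drop]; omega
  -- sublist
  have hsub : t.Sublist (u ++ v) := by
    have hx_mem : x ∈ u.drop j := by
      have hgd : (u.drop j).getD (k0 - j) 0 = u.getD k0 0 := by
        rw [getD_drop' u (by omega : j + (k0 - j) < u.length)]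
        congr 1; omega
      have hlt2 : k0 - j < (u.drop j).length := by rw [List.length_drop]; omega
      rw [hx, ← hgd, List.getD_eq_getElem _ _ hlt2]
      exact List.getElem_mem _
    have h1' : (u.take j ++ [x]).Sublist (u.take j ++ u.drop j) :=
      List.Sublist.append (List.Sublist.refl _) (List.singleton_sublist.mpr hx_mem)
    rw [List.take_append_drop] at h1'
    exact List.Sublist.append h1' (List.drop_sublist _ _)
  -- entries
  have hL : ∀ c, c < j → t.getD c 0 = u.getD c 0 := by
    intro c hc
    rw [hT, List.getD_append _ _ _ c (by omega),
      List.getD_append _ _ _ c (by omega), getD_take' u hc hju]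
  have hM : t.getD j 0 = x := by
    rw [hT, List.getD_append _ _ _ j (by omega),
      List.getD_append_right _ _ _ j (by omega)]
    simp [hlt]
  have hR : ∀ c, j < c → c < v.length + 1 → t.getD c 0 = v.getD (c - 1) 0 := by
    intro c hc1 hc2
    rw [hT, List.getD_append_right _ _ _ c (by omega), hlleft,
      getD_drop' v (by omega : j + (c - (j + 1)) < v.length)]
    congr 1; omega
  -- pivot facts
  have hju' : 1 ≤ j → j ≤ mu := by
    intro hj1
    by_contra hcon
    push_neg at hcon
    have := inc_lt hiu (by omega : mu ≤ (j - 1) + 1) (by omega : j - 1 < k0) hk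
    have h2' := h2 hj1
    omega
  set M := max mv (j + 1) with hMdef
  have hMle : M ≤ v.length := by
    have : j + 1 ≤ v.length := by omega
    omega
  refine ⟨t, hsub, ⟨?_, M + 1, by omega, by omega, ?_, ?_⟩, hlent⟩
  · intro y hy
    have := hsub.subset hy
    rcases List.mem_append.mp this with h | h
    · exact hupos y h
    · exact hvpos y h
  · -- decreasing part
    intro c hc
    rcases Nat.lt_trichotomy (c + 1) j with hcj | hcj | hcj
    · rw [hL (c + 1) hcj, hL c (by omega)]
      exact hdu c (by have := hju' (by omega); omega)
    · have hcg : t.getD (c + 1) 0 = x := by rw [hcj, hM]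
      rw [hcg, hL c (by omega)]
      have h2' := h2 (by omega)
      have he : j - 1 = c := by omega
      rw [he] at h2'
      exact h2'
    · rcases Nat.lt_trichotomy c j with hcj2 | hcj2 | hcj2
      · omega
      · have hcg : t.getD c 0 = x := by rw [hcj2, hM]
        rw [hcg, hR (c + 1) (by omega) (by omega)]
        have he : c + 1 - 1 = j := by omega
        rw [he]
        exact h1
      · rw [hR (c + 1) (by omega) (by omega), hR c (by omega) (by omega)]
        have hcmv : c < mv := by omega
        have := hdv (c - 1) (by omega)
        have he : c - 1 + 1 = c := by omega
        rw [he] at this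
        exact this
  · -- increasing part
    intro c hc1 hc2
    rw [hlent] at hc2
    rw [hR (c + 1) (by omega) (by omega), hR c (by omega) (by omega)]
    have := hiv (c - 1) (by omega) (by omega : c - 1 + 1 < v.length)
    have he : c - 1 + 1 = c := by omega
    rw [he] at this
    exact this

lemma easyB {u v : List ℕ} (hu : IsHookWord u) (hv : IsHookWord v)
    (hlen : u.length < v.length) {j k0 : ℕ} (hjk : j ≤ k0) (hk : k0 < u.length)
    (h1 : u.getD k0 0 < v.getD j 0)
    (h2 : v.getD j 0 < v.getD (k0 + 1) 0) :
    ∃ t : List ℕ, t.Sublist (u ++ v) ∧ IsHookWord t ∧ t.length = v.length + 1 := by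
  obtain ⟨hupos, mu, hmu1, hmu2, hdu, hiu⟩ := hu
  obtain ⟨hvpos, mv, hmv1, hmv2, hdv, hiv⟩ := hv
  set x := v.getD j 0 with hx
  set t := u.take (k0 + 1) ++ ([x] ++ v.drop (k0 + 1)) with hT
  have hk1 : k0 + 1 ≤ u.length := by omega
  have hkp : k0 + 1 ≤ v.length := by omega
  have hlt : (u.take (k0 + 1)).length = k0 + 1 := by rw [List.length_take]; omega
  have hlent : t.length = v.length + 1 := by
    simp only [hT, List.length_append, List.length_take, List.length_drop,
      List.length_singleton]
    omega
  have hsub : t.Sublist (u ++ v) := by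
    have hx_mem : x ∈ v.take (k0 + 1) := by
      have hgd : (v.take (k0 + 1)).getD j 0 = v.getD j 0 := getD_take' v (by omega) hkp
      have hlt2 : j < (v.take (k0 + 1)).length := by rw [List.length_take]; omega
      rw [hx, ← hgd, List.getD_eq_getElem _ _ hlt2]
      exact List.getElem_mem _
    have h1' : ([x] ++ v.drop (k0 + 1)).Sublist (v.take (k0 + 1) ++ v.drop (k0 + 1)) :=
      List.Sublist.append (List.singleton_sublist.mpr hx_mem) (List.Sublist.refl _)
    rw [List.take_append_drop] at h1'
    exact List.Sublist.append (List.take_sublist _ _) h1'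
  have hL : ∀ c, c < k0 + 1 → t.getD c 0 = u.getD c 0 := by
    intro c hc
    rw [hT, List.getD_append _ _ _ c (by omega), getD_take' u hc hk1]
  have hM : t.getD (k0 + 1) 0 = x := by
    rw [hT, List.getD_append_right _ _ _ (k0 + 1) (by omega), hlt]
    simp
  have hR : ∀ c, k0 + 1 < c → c < v.length + 1 → t.getD c 0 = v.getD (c - 1) 0 := by
    intro c hc1 hc2
    rw [hT, List.getD_append_right _ _ _ c (by omega), hlt,
      List.getD_append_right _ _ _ (c - (k0 + 1)) (by simp; omega)]
    have hll : ([x] : List ℕ).length = 1 := rfl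
    rw [hll, getD_drop' v (by omega : (k0 + 1) + (c - (k0 + 1) - 1) < v.length)]
    congr 1; omega
  have hmvk : mv ≤ k0 + 1 := by
    by_contra hcon
    push_neg at hcon
    have := dec_le hdv (by omega : j ≤ k0 + 1) hcon
    omega
  refine ⟨t, hsub, ⟨?_, min mu (k0 + 1), by omega, by omega, ?_, ?_⟩, hlent⟩
  · intro y hy
    rcases List.mem_append.mp (hsub.subset hy) with h | h
    · exact hupos y h
    · exact hvpos y h
  · intro c hc
    rw [hL (c + 1) (by omega), hL c (by omega)]
    exact hdu c (by omega)
  · intro c hc1 hc2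
    rw [hlent] at hc2
    rcases Nat.lt_trichotomy (c + 1) (k0 + 1) with hck | hck | hck
    · rw [hL (c + 1) hck, hL c (by omega)]
      exact hiu c (by omega) (by omega)
    · have hcg : t.getD (c + 1) 0 = x := by rw [hck, hM]
      rw [hcg, hL c (by omega)]
      have he : c = k0 := by omega
      rw [he]
      exact h1
    · rcases Nat.lt_trichotomy c (k0 + 1) with hck2 | hck2 | hck2
      · omega
      · have hcg : t.getD c 0 = x := by rw [hck2, hM]
        rw [hcg, hR (c + 1) (by omega) (by omega)]
        have he : c + 1 - 1 = k0 + 1 := by omega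
        rw [he]
        exact h2
      · rw [hR (c + 1) (by omega) (by omega), hR c (by omega) (by omega)]
        have := hiv (c - 1) (by omega) (by omega : c - 1 + 1 < v.length)
        have he : c - 1 + 1 = c := by omega
        rw [he] at this
        exact this


lemma key {u v : List ℕ} (hu : IsHookWord u) (hv : IsHookWord v)
    (hlen : u.length < v.length)
    (F1 : ∀ k, k < u.length → u.getD k 0 < v.getD 0 0)
    (F3 : ∀ j k, j < k → k < u.length → u.getD k 0 ≤ u.getD j 0 →
      u.getD k 0 < v.getD (j + 1) 0)
    (G : ∀ a k, a ≤ k → k < u.length → u.getD k 0 < v.getD a 0 →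
      v.getD (k + 1) 0 ≤ v.getD a 0)
    {t : List ℕ} (ht : t.Sublist (u ++ v)) (hhook : IsHookWord t) :
    t.length ≤ v.length := by
  obtain ⟨tu, tv, rfl, htu, htv⟩ := List.sublist_append_iff.mp ht
  obtain ⟨I, hI, hImono⟩ := sublist_index htu
  obtain ⟨J, hJ, hJmono⟩ := sublist_index htv
  obtain ⟨hupos, mu, hmu1, hmu2, hdu, hiu⟩ := hu
  obtain ⟨hvpos, mv, hmv1, hmv2, hdv, hiv⟩ := hv
  obtain ⟨htpos, m, hm1, hm2, hdt, hit⟩ := hhook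
  set q := u.length with hq
  set p := v.length with hp
  set r := tu.length with hr
  set s := tv.length with hs
  have hrq : r ≤ q := htu.length_le
  have hsp : s ≤ p := htv.length_le
  have hlen_t : (tu ++ tv).length = r + s := by simp [hr, hs]
  rw [hlen_t] at hm2 hit ⊢
  -- entry descriptions
  have htL : ∀ c, c < r → (tu ++ tv).getD c 0 = u.getD (I c) 0 := by
    intro c hc
    rw [List.getD_append _ _ _ c (by omega)]
    exact (hI c hc).2
  have htR : ∀ c, c < s → (tu ++ tv).getD (r + c) 0 = v.getD (J c) 0 := by
    intro c hc
    rw [List.getD_append_right _ _ _ (r + c) (by omega)]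
    have he : r + c - tu.length = c := by omega
    rw [he]
    exact (hJ c hc).2
  rcases Nat.eq_zero_or_pos s with hs0 | hs0
  · omega
  rcases Nat.eq_zero_or_pos r with hr0 | hr0
  · omega
  set e := I (r - 1) with he_def
  set j1 := J 0 with hj1_def
  have he_q : e < q := (hI (r - 1) (by omega)).1
  have hj1p : j1 < p := (hJ 0 (by omega)).1
  have hr_le : r ≤ e + 1 := by
    have := mono_gap hImono 0 (r - 1) (by omega)
    rw [Nat.zero_add] at this
    omega
  have hs_le : s + j1 ≤ p := by
    have h1 := mono_gap hJmono 0 (s - 1) (by omega)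
    rw [Nat.zero_add] at h1
    have h2 := (hJ (s - 1) (by omega)).1
    omega
  have ht_r1 : (tu ++ tv).getD (r - 1) 0 = u.getD e 0 := htL (r - 1) (by omega)
  have ht_r : (tu ++ tv).getD r 0 = v.getD j1 0 := by
    have := htR 0 hs0
    rw [Nat.add_zero] at this
    exact this
  by_cases hcase : m ≤ r
  · -- Case 1 : pivot inside tu
    have hlt : u.getD e 0 < v.getD j1 0 := by
      have := hit (r - 1) (by omega) (by omega)
      have he2 : r - 1 + 1 = r := by omega
      rw [he2, ht_r1, ht_r] at this
      exact this
    by_cases hj : e + 1 ≤ j1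
    · omega
    · push_neg at hj
      have hGe : v.getD (e + 1) 0 ≤ v.getD j1 0 := G j1 e (by omega) he_q hlt
      have hj1mv : j1 + 2 ≤ mv := by
        by_contra hcon
        push_neg at hcon
        have := inc_lt hiv (by omega : mv ≤ j1 + 1) (by omega : j1 < e + 1)
          (by omega : e + 1 < p)
        omega
      by_cases hs1 : s = 1
      · omega
      · have hs2' : 2 ≤ s := by omega
        set j2 := J 1 with hj2_def
        have hj2p : j2 < p := (hJ 1 (by omega)).1
        have hj12 : v.getD j1 0 < v.getD j2 0 := by
          have := hit r (by omega) (by omega)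
          rw [ht_r] at this
          have h2 := htR 1 (by omega)
          rw [h2] at this
          exact this
        have hj2mv : mv ≤ j2 := by
          by_contra hcon
          push_neg at hcon
          have hj1j2 : j1 ≤ j2 := le_of_lt (hJmono 0 1 (by omega) (by omega))
          have := dec_le hdv hj1j2 hcon
          omega
        have hs2 : s + j2 ≤ p + 1 := by
          have h1 := mono_gap hJmono 1 (s - 2) (by omega)
          have h2 := (hJ (s - 1) (by omega)).1
          have he2 : 1 + (s - 2) = s - 1 := by omega
          rw [he2] at h1
          omega
        by_cases hev : mv ≤ e + 1
        · have hj2e : e + 2 ≤ j2 := by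
            by_contra hcon
            push_neg at hcon
            rcases Nat.lt_or_ge j2 (e + 1) with hlt2 | hge2
            · have := inc_lt hiv (by omega : mv ≤ j2 + 1) hlt2 (by omega : e + 1 < p)
              omega
            · have he2 : j2 = e + 1 := by omega
              rw [he2] at hj12
              omega
          omega
        · omega
  · -- Case 2 : tu weakly decreasing
    push_neg at hcase
    have hge : v.getD j1 0 ≤ u.getD e 0 := by
      have := dec_le hdt (by omega : r - 1 ≤ r) (by omega : r < m)
      rw [ht_r1, ht_r] at this
      exact this
    have hF1e := F1 e he_q
    have hj1pos : 1 ≤ j1 := by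
      rcases Nat.eq_zero_or_pos j1 with h0 | h0
      · rw [h0] at hge; omega
      · exact h0
    by_cases hr1 : r = 1
    · omega
    · have hr2 : 2 ≤ r := by omega
      have Phi : ∀ c, c + 2 ≤ r →
          I c < e ∧ u.getD e 0 < v.getD (I c + 1) 0 ∧
            v.getD (e + 1) 0 ≤ v.getD (I c + 1) 0 := by
        intro c hc
        have hIc : I c < e := hImono c (r - 1) (by omega) (by omega)
        have hIcq : I c < q := (hI c (by omega)).1
        have hdec_tu : u.getD e 0 ≤ u.getD (I c) 0 := by
          have := dec_le hdt (by omega : c ≤ r - 1) (by omega : r - 1 < m)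
          rw [ht_r1, htL c (by omega)] at this
          exact this
        have h3 := F3 (I c) e hIc he_q hdec_tu
        have h4 := G (I c + 1) e (by omega) he_q h3
        exact ⟨hIc, h3, h4⟩
      by_cases h2a : mv ≤ j1 + 1
      · have hclaim := Phi (r - 2) (by omega)
        have hbound : I (r - 2) + 2 < mv := by
          by_contra hcon
          push_neg at hcon
          have := inc_lt hiv (by omega : mv ≤ (I (r - 2) + 1) + 1)
            (by omega : I (r - 2) + 1 < e + 1) (by omega : e + 1 < p)
          omega
        have hge2 : r - 2 ≤ I (r - 2) := by
          have := mono_gap hImono 0 (r - 2) (by omega)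
          rw [Nat.zero_add] at this
          omega
        omega
      · push_neg at h2a
        suffices hrj : r ≤ j1 by omega
        by_contra hcon
        push_neg at hcon
        have hc0 : (j1 - 1) + 2 ≤ r := by omega
        obtain ⟨hb1, hb2, hb3⟩ := Phi (j1 - 1) hc0
        set b0 := I (j1 - 1) with hb0_def
        have hb0ge : j1 - 1 ≤ b0 := by
          have := mono_gap hImono 0 (j1 - 1) (by omega)
          rw [Nat.zero_add] at this
          omega
        have hb0 : mv ≤ b0 + 1 := by
          by_contra hcon2
          push_neg at hcon2
          have := dec_le hdv (by omega : j1 ≤ b0 + 1) hcon2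
          omega
        have := inc_lt hiv (by omega : mv ≤ (b0 + 1) + 1)
          (by omega : b0 + 1 < e + 1) (by omega : e + 1 < p)
        omega

lemma rowWord_length (lam : List ℕ) (T : ℕ × ℕ → ℕ) (i : ℕ) :
    (rowWord lam T i).length = lam.getD (i - 1) 0 := by
  simp [rowWord]

lemma rowWord_getD (lam : List ℕ) (T : ℕ × ℕ → ℕ) (i : ℕ) {c : ℕ}
    (hc : c < lam.getD (i - 1) 0) :
    (rowWord lam T i).getD c 0 = T (i, i + c) := by
  have hlen : c < (rowWord lam T i).length := by rw [rowWord_length]; exact hc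
  rw [List.getD_eq_getElem _ _ hlen]
  simp [rowWord]

end HookAux

/-- Lemma 2.3 of the paper: characterization of decomposition tableaux
among shifted tableaux whose rows are hook words, via forbidden configurations. -/
theorem stmt0 (lam : List ℕ) (hlam : IsStrictPartition lam) (T : ℕ × ℕ → ℕ)
    (hpos : ∀ i j, InSD lam i j → 0 < T (i, j))
    (hrows : ∀ i, 1 ≤ i → i ≤ lam.length → IsHookWord (rowWord lam T i)) :
    IsDecompTab lam T ↔
      ¬ ∃ i j k : ℕ, 1 ≤ i ∧ i + 1 ≤ lam.length ∧
        1 ≤ j ∧ j ≤ lam.getD i 0 ∧ 1 ≤ k ∧ k ≤ lam.getD i 0 ∧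
        ((T (i, i) ≤ T (i + 1, i + k)) ∨
         (j < k ∧ T (i, i + j) ≤ T (i + 1, i + k) ∧ T (i + 1, i + k) ≤ T (i + 1, i + j)) ∨
         (T (i + 1, i + k) < T (i, i) ∧ T (i, i) < T (i, i + k)) ∨
         (j < k ∧ T (i + 1, i + k) < T (i, i + j) ∧ T (i, i + j) < T (i, i + k))) := by
  have hchain : ∀ i, 1 ≤ i → i + 1 ≤ lam.length →
      lam.getD i 0 < lam.getD (i - 1) 0 := by
    intro i hi1 hi2
    have hc := List.isChain_iff_getElem.mp hlam.1 (i - 1) (by omega)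
    have he : i - 1 + 1 = i := by omega
    simp only [he] at hc
    rw [List.getD_eq_getElem _ _ (by omega : i - 1 < lam.length),
      List.getD_eq_getElem _ _ (by omega : i < lam.length)]
    exact hc
  constructor
  · intro hD hcfg
    obtain ⟨i, j, k, hi1, hi2, hj1, hj2, hk1, hk2, hor⟩ := hcfg
    have hu : IsHookWord (rowWord lam T (i + 1)) := hrows (i + 1) (by omega) hi2
    have hv : IsHookWord (rowWord lam T i) := hrows i hi1 (by omega)
    set u := rowWord lam T (i + 1) with hudef
    set v := rowWord lam T i with hvdef
    have hql : u.length = lam.getD i 0 := by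
      rw [hudef, HookAux.rowWord_length]
      simp
    have hpl : v.length = lam.getD (i - 1) 0 := by rw [hvdef, HookAux.rowWord_length]
    have hqp : u.length < v.length := by rw [hql, hpl]; exact hchain i hi1 hi2
    have hUg : ∀ c, c < lam.getD i 0 → u.getD c 0 = T (i + 1, i + 1 + c) := by
      intro c hc
      rw [hudef, HookAux.rowWord_getD lam T (i + 1) (by simpa using hc)]
    have hVg : ∀ c, c < lam.getD (i - 1) 0 → v.getD c 0 = T (i, i + c) := by
      intro c hc
      rw [hvdef, HookAux.rowWord_getD lam T i hc]
    have hqlt : lam.getD i 0 < lam.getD (i - 1) 0 := hchain i hi1 hi2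
    have ek : u.getD (k - 1) 0 = T (i + 1, i + k) := by
      rw [hUg (k - 1) (by omega)]
      have harg : i + 1 + (k - 1) = i + k := by omega
      rw [harg]
    have e0 : v.getD 0 0 = T (i, i) := by
      rw [hVg 0 (by omega), Nat.add_zero]
    have ekv : v.getD k 0 = T (i, i + k) := hVg k (by omega)
    have hmax := hD.2 i hi1 hi2
    rw [← hudef, ← hvdef] at hmax
    have hkk : k - 1 + 1 = k := by omega
    rcases hor with hA | hB | hC | hD'
    · obtain ⟨t, hsubt, hhookt, hlent⟩ := HookAux.easyA hu hv hqp
        (by omega : (0 : ℕ) ≤ k - 1) (by omega : k - 1 < u.length)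
        (by rw [e0, ek]; exact hA) (by omega)
      have := hmax.2.2 t hsubt hhookt
      omega
    · obtain ⟨hjk, hb1, hb2⟩ := hB
      have ej : v.getD j 0 = T (i, i + j) := hVg j (by omega)
      have eju : u.getD (j - 1) 0 = T (i + 1, i + j) := by
        rw [hUg (j - 1) (by omega)]
        have harg : i + 1 + (j - 1) = i + j := by omega
        rw [harg]
      obtain ⟨t, hsubt, hhookt, hlent⟩ := HookAux.easyA hu hv hqp
        (by omega : j ≤ k - 1) (by omega : k - 1 < u.length)
        (by rw [ej, ek]; exact hb1) (fun _ => by rw [ek, eju]; exact hb2)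
      have := hmax.2.2 t hsubt hhookt
      omega
    · obtain ⟨t, hsubt, hhookt, hlent⟩ := HookAux.easyB hu hv hqp
        (by omega : (0 : ℕ) ≤ k - 1) (by omega : k - 1 < u.length)
        (by rw [e0, ek]; exact hC.1) (by rw [hkk, e0, ekv]; exact hC.2)
      have := hmax.2.2 t hsubt hhookt
      omega
    · obtain ⟨hjk, hd1, hd2⟩ := hD'
      have ej : v.getD j 0 = T (i, i + j) := hVg j (by omega)
      obtain ⟨t, hsubt, hhookt, hlent⟩ := HookAux.easyB hu hv hqp
        (by omega : j ≤ k - 1) (by omega : k - 1 < u.length)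
        (by rw [ej, ek]; exact hd1) (by rw [hkk, ej, ekv]; exact hd2)
      have := hmax.2.2 t hsubt hhookt
      omega
  · intro hno
    refine ⟨hrows, ?_⟩
    intro i hi1 hi2
    have hu : IsHookWord (rowWord lam T (i + 1)) := hrows (i + 1) (by omega) hi2
    have hv : IsHookWord (rowWord lam T i) := hrows i hi1 (by omega)
    set u := rowWord lam T (i + 1) with hudef
    set v := rowWord lam T i with hvdef
    have hql : u.length = lam.getD i 0 := by
      rw [hudef, HookAux.rowWord_length]
      simp
    have hpl : v.length = lam.getD (i - 1) 0 := by rw [hvdef, HookAux.rowWord_length]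
    have hqp : u.length < v.length := by rw [hql, hpl]; exact hchain i hi1 hi2
    have hqlt : lam.getD i 0 < lam.getD (i - 1) 0 := hchain i hi1 hi2
    have hUg : ∀ c, c < lam.getD i 0 → u.getD c 0 = T (i + 1, i + 1 + c) := by
      intro c hc
      rw [hudef, HookAux.rowWord_getD lam T (i + 1) (by simpa using hc)]
    have hVg : ∀ c, c < lam.getD (i - 1) 0 → v.getD c 0 = T (i, i + c) := by
      intro c hc
      rw [hvdef, HookAux.rowWord_getD lam T i hc]
    refine ⟨List.sublist_append_right _ _, hv, ?_⟩
    intro t hts htht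
    have F1 : ∀ k0, k0 < u.length → u.getD k0 0 < v.getD 0 0 := by
      intro k0 hk0
      by_contra hle
      push_neg at hle
      apply hno
      refine ⟨i, 1, k0 + 1, hi1, hi2, le_refl 1, by omega, by omega, by omega, Or.inl ?_⟩
      have e2 : T (i + 1, i + (k0 + 1)) = u.getD k0 0 := by
        rw [hUg k0 (by omega)]
        have harg : i + 1 + k0 = i + (k0 + 1) := by omega
        rw [harg]
      have e1 : T (i, i) = v.getD 0 0 := by
        rw [hVg 0 (by omega), Nat.add_zero]
      rw [e1, e2]
      exact hle
    have F3 : ∀ j0 k0, j0 < k0 → k0 < u.length → u.getD k0 0 ≤ u.getD j0 0 →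
        u.getD k0 0 < v.getD (j0 + 1) 0 := by
      intro j0 k0 hjk hk0 hle
      by_contra hcon
      push_neg at hcon
      apply hno
      refine ⟨i, j0 + 1, k0 + 1, hi1, hi2, by omega, by omega, by omega, by omega,
        Or.inr (Or.inl ⟨by omega, ?_, ?_⟩)⟩
      · have e1 : T (i, i + (j0 + 1)) = v.getD (j0 + 1) 0 := by
          rw [hVg (j0 + 1) (by omega)]
        have e2 : T (i + 1, i + (k0 + 1)) = u.getD k0 0 := by
          rw [hUg k0 (by omega)]
          have harg : i + 1 + k0 = i + (k0 + 1) := by omega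
          rw [harg]
        rw [e1, e2]
        exact hcon
      · have e2 : T (i + 1, i + (k0 + 1)) = u.getD k0 0 := by
          rw [hUg k0 (by omega)]
          have harg : i + 1 + k0 = i + (k0 + 1) := by omega
          rw [harg]
        have e3 : T (i + 1, i + (j0 + 1)) = u.getD j0 0 := by
          rw [hUg j0 (by omega)]
          have harg : i + 1 + j0 = i + (j0 + 1) := by omega
          rw [harg]
        rw [e2, e3]
        exact hle
    have G : ∀ a k0, a ≤ k0 → k0 < u.length → u.getD k0 0 < v.getD a 0 →
        v.getD (k0 + 1) 0 ≤ v.getD a 0 := by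
      intro a k0 hak hk0 hlt
      by_contra hcon
      push_neg at hcon
      have e2 : T (i + 1, i + (k0 + 1)) = u.getD k0 0 := by
        rw [hUg k0 (by omega)]
        have harg : i + 1 + k0 = i + (k0 + 1) := by omega
        rw [harg]
      have e4 : T (i, i + (k0 + 1)) = v.getD (k0 + 1) 0 := by
        rw [hVg (k0 + 1) (by omega)]
      rcases Nat.eq_zero_or_pos a with ha0 | ha0
      · subst ha0
        apply hno
        refine ⟨i, 1, k0 + 1, hi1, hi2, le_refl 1, by omega, by omega, by omega,
          Or.inr (Or.inr (Or.inl ⟨?_, ?_⟩))⟩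
        · have e1 : T (i, i) = v.getD 0 0 := by rw [hVg 0 (by omega), Nat.add_zero]
          rw [e1, e2]
          exact hlt
        · have e1 : T (i, i) = v.getD 0 0 := by rw [hVg 0 (by omega), Nat.add_zero]
          rw [e1, e4]
          exact hcon
      · apply hno
        refine ⟨i, a, k0 + 1, hi1, hi2, by omega, by omega, by omega, by omega,
          Or.inr (Or.inr (Or.inr ⟨by omega, ?_, ?_⟩))⟩
        · have e1 : T (i, i + a) = v.getD a 0 := by rw [hVg a (by omega)]
          rw [e1, e2]
          exact hlt
        · have e1 : T (i, i + a) = v.getD a 0 := by rw [hVg a (by omega)]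
          rw [e1, e4]
          exact hcon
    exact HookAux.key hu hv hqp F1 F3 G hts htht
end

section
/- Let λ be a strict partition. The operations e*_1̄ and f*_1̄ define maps SetDecTab*(λ) → SetDecTab*(λ) ⊔ {0}; that is, whenever e*_1̄(T) ≠ 0 or f*_1̄(T) ≠ 0 for T ∈ SetDecTab*(λ), the resulting filling is again an element of SetDecTab*(λ). Moreover, for T,U ∈ SetDecTab*(λ) one has e*_1̄(T) = U if and only if T = f*_1̄(U). -/
open scoped Classical

/-! ### Auxiliary lemmas for `stmt1` -/

private lemma getD_concat_lt {α : Type*} (Q R : List α) (z d : α) {n : ℕ} (hn : n < Q.length) :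
    (Q ++ z :: R).getD n d = Q.getD n d :=
  List.getD_append _ _ _ _ hn

private lemma getD_concat_eq {α : Type*} (Q R : List α) (z d : α) :
    (Q ++ z :: R).getD Q.length d = z := by
  rw [List.getD_append_right _ _ _ _ le_rfl, Nat.sub_self]; rfl

private lemma getD_concat_gt {α : Type*} (Q R : List α) (z d : α) {n : ℕ} (hn : Q.length < n) :
    (Q ++ z :: R).getD n d = R.getD (n - Q.length - 1) d := by
  rw [List.getD_append_right _ _ _ _ (le_of_lt hn)]
  have h1 : n - Q.length = (n - Q.length - 1) + 1 := by omega
  conv_lhs => rw [h1]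
  rw [List.getD_cons_succ]

private lemma getD_middle {α : Type*} (P Q R : List α) {q : ℕ} (hq : q < Q.length) (d : α) :
    (P ++ (Q ++ R)).getD (P.length + q) d = Q.getD q d := by
  rw [List.getD_append_right _ _ _ _ (by omega), Nat.add_sub_cancel_left]
  exact List.getD_append _ _ _ _ hq

/-- The key swap lemma: in a hook word, a letter from `{1,2}` all of whose successors
are at least `3` can be replaced by any letter of `{1,2}`. -/
private lemma hook_swap {u v : List ℕ} {x y : ℕ}
    (h : IsHookWord (u ++ x :: v)) (hv : ∀ z ∈ v, 3 ≤ z)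
    (hx : x = 1 ∨ x = 2) (hy : y = 1 ∨ y = 2) :
    IsHookWord (u ++ y :: v) := by
  obtain ⟨hpos, m, hm1, hm2, hdec, hinc⟩ := h
  set w := u ++ x :: v with hw
  set w' := u ++ y :: v with hw'
  have hlen : w.length = u.length + (v.length + 1) := by simp [hw]
  have hlen' : w'.length = w.length := by simp [hw, hw', hlen]
  set t := u.length with ht
  have gx : w.getD t 0 = x := getD_concat_eq u v x 0
  have gy : w'.getD t 0 = y := getD_concat_eq u v y 0
  have geq : ∀ s, s ≠ t → w'.getD s 0 = w.getD s 0 := by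
    intro s hs
    rcases lt_or_gt_of_ne hs with h' | h'
    · show (u ++ y :: v).getD s 0 = (u ++ x :: v).getD s 0
      rw [getD_concat_lt u v y 0 h', getD_concat_lt u v x 0 h']
    · show (u ++ y :: v).getD s 0 = (u ++ x :: v).getD s 0
      rw [getD_concat_gt u v y 0 h', getD_concat_gt u v x 0 h']
  have pos : ∀ s, s < w.length → 1 ≤ w.getD s 0 := by
    intro s hs
    rw [List.getD_eq_getElem _ _ hs]
    exact hpos _ (List.getElem_mem hs)
  have tail3 : ∀ s, t < s → s < w.length → 3 ≤ w.getD s 0 := by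
    intro s hs1 hs2
    show 3 ≤ (u ++ x :: v).getD s 0
    rw [getD_concat_gt u v x 0 hs1]
    have hlt : s - t - 1 < v.length := by omega
    rw [List.getD_eq_getElem _ _ hlt]
    exact hv _ (List.getElem_mem hlt)
  have hxb : 1 ≤ x ∧ x ≤ 2 := by rcases hx with rfl | rfl <;> omega
  have hyb : 1 ≤ y ∧ y ≤ 2 := by rcases hy with rfl | rfl <;> omega
  have ht_lt : t < w.length := by omega
  have hm_le : m ≤ t + 1 := by
    by_contra hc
    push_neg at hc
    have h1 := hdec t (by omega)
    have h2 := tail3 (t + 1) (by omega) (by omega)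
    rw [gx] at h1
    omega
  have hm_ge : t ≤ m := by
    by_contra hc
    push_neg at hc
    have h1 := hinc (t - 1) (by omega) (by omega)
    rw [show t - 1 + 1 = t by omega, gx] at h1
    have hpos1 := pos (t - 1) (by omega)
    have htm : w.getD (t - 1) 0 = 1 := by omega
    have h2 := hinc (t - 2) (by omega) (by omega)
    rw [show t - 2 + 1 = t - 1 by omega, htm] at h2
    have := pos (t - 2) (by omega)
    omega
  refine ⟨?_, ?_⟩
  · intro z hz
    rcases List.mem_append.1 hz with hz | hz
    · exact hpos z (List.mem_append.2 (Or.inl hz))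
    · rcases List.mem_cons.1 hz with rfl | hz
      · omega
      · exact hpos z (List.mem_append.2 (Or.inr (List.mem_cons.2 (Or.inr hz))))
  · by_cases caseA : 1 ≤ t ∧ w.getD (t - 1) 0 = 1 ∧ y = 2
    · refine ⟨t, caseA.1, by omega, ?_, ?_⟩
      · intro j hj
        rw [geq (j + 1) (by omega), geq j (by omega)]
        exact hdec j (by omega)
      · intro j hj1 hj2
        rw [hlen'] at hj2
        rcases Nat.lt_trichotomy j t with hjt | hjt | hjt
        · have hjeq : j = t - 1 := by omega
          subst hjeq
          rw [geq (t - 1) (by omega), show t - 1 + 1 = t by omega, gy, caseA.2.1, caseA.2.2]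
          omega
        · rw [hjt, gy, geq (t + 1) (by omega)]
          have := tail3 (t + 1) (by omega) (by omega)
          omega
        · rw [geq j (by omega), geq (j + 1) (by omega)]
          exact hinc j (by omega) (by omega)
    · refine ⟨t + 1, by omega, by omega, ?_, ?_⟩
      · intro j hj
        rcases eq_or_lt_of_le (Nat.lt_succ_iff.mp hj) with hje | hjl
        · rw [hje, gy, geq j (by omega)]
          have hp := pos j (by omega)
          rcases hy with rfl | rfl
          · exact hp
          · have h1t : 1 ≤ t := by omega
            have hne : w.getD (t - 1) 0 ≠ 1 := fun hcon => caseA ⟨h1t, hcon, rfl⟩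
            have hj' : j = t - 1 := by omega
            subst hj'
            omega
        · rw [geq (j + 1) (by omega), geq j (by omega)]
          exact hdec j (by omega)
      · intro j hj1 hj2
        rw [hlen'] at hj2
        by_cases hjt : j = t
        · rw [hjt, gy, geq (t + 1) (by omega)]
          have := tail3 (t + 1) (by omega) (by omega)
          omega
        · have hjgt : t < j := by omega
          rw [geq j (by omega), geq (j + 1) (by omega)]
          exact hinc j (by omega) (by omega)

private lemma maxswap {A B t' : List ℕ} {x y : ℕ}
    (hB : ∀ z ∈ B, 3 ≤ z) (hx : x = 1 ∨ x = 2) (hy : y = 1 ∨ y = 2)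
    (hsub : t'.Sublist (A ++ y :: B)) (hhk : IsHookWord t') :
    ∃ t'', t''.Sublist (A ++ x :: B) ∧ IsHookWord t'' ∧ t''.length = t'.length := by
  obtain ⟨l₁, l₂, rfl, h1, h2⟩ := List.sublist_append_iff.1 hsub
  rcases List.sublist_cons_iff.1 h2 with h2 | ⟨r, rfl, hr⟩
  · exact ⟨l₁ ++ l₂, h1.append (h2.trans (List.sublist_cons_self x B)), hhk, rfl⟩
  · refine ⟨l₁ ++ x :: r, h1.append (hr.cons₂ x), ?_, by simp⟩
    exact hook_swap hhk (fun z hz => hB z (hr.subset hz)) hy hx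
private lemma rowWord_update_ne {lam : List ℕ} {d : ℕ × ℕ → ℕ} {b : ℕ × ℕ} {z : ℕ} {i : ℕ}
    (hi : i ≠ b.1) : rowWord lam (Function.update d b z) i = rowWord lam d i := by
  unfold rowWord
  refine List.map_congr_left fun j hj => ?_
  have hne : (i, i + j) ≠ b := fun hcon => hi (by rw [← hcon])
  exact Function.update_of_ne hne z d

private lemma rowWord_len (lam : List ℕ) (d : ℕ × ℕ → ℕ) (i : ℕ) :
    (rowWord lam d i).length = lam.getD (i - 1) 0 := by
  rw [rowWord, List.length_map, List.length_range]

private lemma rowWord_getElem (lam : List ℕ) (d : ℕ × ℕ → ℕ) (i : ℕ) {j : ℕ}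
    (hj : j < (rowWord lam d i).length) : (rowWord lam d i)[j] = d (i, i + j) := by
  simp only [rowWord, List.getElem_map, List.getElem_range]

private lemma rowWord_split {lam : List ℕ} (d : ℕ × ℕ → ℕ) {r c : ℕ} (z : ℕ)
    (hr : r ≤ c) (hc : c < r + lam.getD (r - 1) 0) :
    rowWord lam (Function.update d (r, c) z) r
      = (rowWord lam d r).take (c - r) ++ z :: (rowWord lam d r).drop (c - r + 1) ∧
    rowWord lam d r
      = (rowWord lam d r).take (c - r) ++ d (r, c) :: (rowWord lam d r).drop (c - r + 1) := by
  have hwlen := rowWord_len lam d r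
  have hulen := rowWord_len lam (Function.update d (r, c) z) r
  have hlt : c - r < (rowWord lam d r).length := by omega
  have hsplit0 : rowWord lam d r = (rowWord lam d r).take (c - r)
      ++ (rowWord lam d r)[c - r] :: (rowWord lam d r).drop (c - r + 1) := by
    conv_lhs => rw [← List.take_append_drop (c - r) (rowWord lam d r)]
    rw [List.drop_eq_getElem_cons hlt]
  have hval : (rowWord lam d r)[c - r] = d (r, c) := by
    rw [rowWord_getElem lam d r hlt]
    have hrc : r + (c - r) = c := by omega
    rw [hrc]
  have hset : rowWord lam (Function.update d (r, c) z) r = (rowWord lam d r).set (c - r) z := by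
    apply List.ext_getElem
    · rw [hulen, List.length_set, hwlen]
    · intro j h1 h2
      have hj : j < (rowWord lam d r).length := by
        rw [List.length_set] at h2; exact h2
      rw [List.getElem_set, rowWord_getElem lam _ r h1]
      by_cases hjc : c - r = j
      · rw [if_pos hjc]
        have hrc : r + j = c := by omega
        have heq : ((r : ℕ), r + j) = (r, c) := by rw [hrc]
        rw [heq, Function.update_self]
      · rw [if_neg hjc, rowWord_getElem lam d r hj]
        have hne : ((r : ℕ), r + j) ≠ (r, c) := by
          intro hcon
          injection hcon with hc1 hc2
          omega
        rw [Function.update_of_ne hne]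
  constructor
  · rw [hset, List.set_eq_take_cons_drop z hlt]
  · conv_lhs => rw [hsplit0, hval]

private lemma key {lam : List ℕ} {d : ℕ × ℕ → ℕ} (hd : IsDecompTab lam d)
    {r c : ℕ} (hb : InSD lam r c) {x y : ℕ}
    (hdx : d (r, c) = x) (hx : x = 1 ∨ x = 2) (hy : y = 1 ∨ y = 2)
    (hH : ∀ i j, InSD lam i j → (i < r ∨ (i = r ∧ c < j)) → 3 ≤ d (i, j)) :
    IsDecompTab lam (Function.update d (r, c) y) := by
  obtain ⟨hrow, hpair⟩ := hd
  obtain ⟨hb1, hb2, hb3, hb4⟩ := hb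
  obtain ⟨hA, hX⟩ := rowWord_split d y hb3 hb4
  rw [hdx] at hX
  have hxd : d (r, c) = 1 ∨ d (r, c) = 2 := by rw [hdx]; exact hx
  -- entries of rows above r are ≥ 3
  have hrow3 : ∀ i, 1 ≤ i → i ≤ lam.length → i < r → ∀ z ∈ rowWord lam d i, 3 ≤ z := by
    intro i h1 h2 h3 z hz
    rw [rowWord, List.mem_map] at hz
    obtain ⟨j, hj, rfl⟩ := hz
    rw [List.mem_range] at hj
    exact hH i (i + j) ⟨h1, h2, by omega, by omega⟩ (Or.inl h3)
  have hwlen := rowWord_len lam d r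
  have hB3 : ∀ z ∈ (rowWord lam d r).drop (c - r + 1), 3 ≤ z := by
    intro z hz
    obtain ⟨k, hk, rfl⟩ := List.getElem_of_mem hz
    rw [List.getElem_drop]
    have hklen : c - r + 1 + k < (rowWord lam d r).length := by
      rw [List.length_drop] at hk
      omega
    rw [rowWord_getElem lam d r hklen]
    exact hH r (r + (c - r + 1 + k)) ⟨hb1, hb2, by omega, by omega⟩ (Or.inr ⟨rfl, by omega⟩)
  have hlen_eq : (rowWord lam (Function.update d (r, c) y) r).length
      = (rowWord lam d r).length := by
    rw [rowWord_len, rowWord_len]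
  have hookr : IsHookWord (rowWord lam (Function.update d (r, c) y) r) := by
    rw [hA]
    refine hook_swap ?_ hB3 hx hy
    rw [← hX]
    exact hrow r hb1 hb2
  constructor
  · intro i h1 h2
    by_cases hir : i = r
    · rw [hir]; exact hookr
    · rw [rowWord_update_ne hir]
      exact hrow i h1 h2
  · intro i h1 h2
    by_cases hir : i = r
    · -- pair (r, r+1)
      subst hir
      have hne : i + 1 ≠ ((i : ℕ), c).1 := by omega
      rw [rowWord_update_ne hne]
      obtain ⟨hsub0, hhk0, hmax0⟩ := hpair i h1 h2
      refine ⟨List.sublist_append_right _ _, hookr, ?_⟩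
      intro t' hsubt hhkt
      rw [hA, ← List.append_assoc] at hsubt
      obtain ⟨t'', hsub'', hhk'', hlen''⟩ :=
        maxswap (x := x) hB3 hx hy hsubt hhkt
      rw [List.append_assoc, ← hX] at hsub''
      have := hmax0 t'' hsub'' hhk''
      rw [hlen_eq]
      omega
    · by_cases hir2 : i + 1 = r
      · -- pair (r-1, r)
        have hne : i ≠ ((r : ℕ), c).1 := by simpa using fun hcon => hir (by omega)
        rw [rowWord_update_ne hne, hir2]
        obtain ⟨hsub0, hhk0, hmax0⟩ := hpair i h1 h2
        rw [hir2] at hmax0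
        refine ⟨List.sublist_append_right _ _, hrow i h1 (by omega), ?_⟩
        intro t' hsubt hhkt
        have hCi3 : ∀ z ∈ (rowWord lam d r).drop (c - r + 1) ++ rowWord lam d i, 3 ≤ z := by
          intro z hz
          rcases List.mem_append.1 hz with hz | hz
          · exact hB3 z hz
          · exact hrow3 i h1 (by omega) (by omega) z hz
        rw [hA, List.append_assoc, List.cons_append] at hsubt
        obtain ⟨t'', hsub'', hhk'', hlen''⟩ :=
          maxswap (x := x) hCi3 hx hy hsubt hhkt
        rw [← List.cons_append, ← List.append_assoc, ← hX] at hsub''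
        have := hmax0 t'' hsub'' hhk''
        have hli : (rowWord lam d i).length = lam.getD (i - 1) 0 := rowWord_len lam d i
        omega
      · have hne1 : i ≠ ((r : ℕ), c).1 := by simpa using hir
        have hne2 : i + 1 ≠ ((r : ℕ), c).1 := by simpa using hir2
        rw [rowWord_update_ne hne1, rowWord_update_ne hne2]
        exact hpair i h1 h2
private def boxLt (b b' : ℕ × ℕ) : Prop := b.1 < b'.1 ∨ (b.1 = b'.1 ∧ b'.2 < b.2)

private lemma revrowBoxes_pairwise (lam : List ℕ) : (revrowBoxes lam).Pairwise boxLt := by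
  unfold revrowBoxes
  rw [List.flatMap_def, List.pairwise_flatten]
  constructor
  · intro l hl
    rw [List.mem_map] at hl
    obtain ⟨r, _, rfl⟩ := hl
    rw [List.pairwise_map, List.pairwise_reverse]
    refine List.Pairwise.imp ?_ List.pairwise_lt_range
    intro a b hab
    right
    exact ⟨rfl, by omega⟩
  · rw [List.pairwise_map]
    refine List.Pairwise.imp ?_ List.pairwise_lt_range
    intro a b hab x hx y hy
    rw [List.mem_map] at hx hy
    obtain ⟨ja, _, rfl⟩ := hx
    obtain ⟨jb, _, rfl⟩ := hy
    left
    omega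

private lemma revrowBoxes_nodup (lam : List ℕ) : (revrowBoxes lam).Nodup := by
  refine (revrowBoxes_pairwise lam).imp ?_
  intro a b hab
  intro hcon
  subst hcon
  rcases hab with h | h
  · omega
  · omega

private lemma mem_revrowBoxes {lam : List ℕ} {i j : ℕ} :
    (i, j) ∈ revrowBoxes lam ↔ InSD lam i j := by
  unfold revrowBoxes InSD
  rw [List.mem_flatMap]
  constructor
  · rintro ⟨r, hr, hmem⟩
    rw [List.mem_range] at hr
    rw [List.mem_map] at hmem
    obtain ⟨j', hj', heq⟩ := hmem
    rw [List.mem_reverse, List.mem_range] at hj'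
    injection heq with h1 h2
    subst h1
    subst h2
    refine ⟨by omega, by omega, by omega, ?_⟩
    have : r + 1 - 1 = r := by omega
    rw [this]
    omega
  · rintro ⟨h1, h2, h3, h4⟩
    refine ⟨i - 1, List.mem_range.2 (by omega), ?_⟩
    rw [List.mem_map]
    refine ⟨j - i, ?_, ?_⟩
    · rw [List.mem_reverse, List.mem_range]
      omega
    · have e1 : i - 1 + 1 = i := by omega
      rw [e1]
      have e2 : i + (j - i) = j := by omega
      rw [e2]

private lemma flatMap_index {α β : Type*} :
    ∀ (L : List β) (F : β → List α) (p : ℕ), p < (L.flatMap F).length →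
      ∃ L1 b L2 q, L = L1 ++ b :: L2 ∧ q < (F b).length ∧
        p = (L1.flatMap F).length + q := by
  intro L
  induction L with
  | nil => intro F p hp; simp at hp
  | cons hd tl ih =>
    intro F p hp
    rw [List.flatMap_cons, List.length_append] at hp
    by_cases h : p < (F hd).length
    · exact ⟨[], hd, tl, p, rfl, h, by simp⟩
    · obtain ⟨L1, b, L2, q, h1, h2, h3⟩ := ih F (p - (F hd).length) (by omega)
      refine ⟨hd :: L1, b, L2, q, by rw [h1, List.cons_append], h2, ?_⟩
      rw [List.flatMap_cons, List.length_append]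
      omega

private def sortDesc (m : Multiset ℕ) : List ℕ := (Multiset.sort m (· ≤ ·)).reverse

private def blockM (T : ℕ × ℕ → Multiset ℕ) (b : ℕ × ℕ) : List ((ℕ × ℕ) × ℕ) :=
  (sortDesc (T b)).map fun v => (b, v)

private lemma revrowEntriesM_eq (lam : List ℕ) (T : ℕ × ℕ → Multiset ℕ) :
    revrowEntriesM lam T = (revrowBoxes lam).flatMap (blockM T) := rfl

private lemma mem_sortDesc {m : Multiset ℕ} {v : ℕ} : v ∈ sortDesc m ↔ v ∈ m := by
  unfold sortDesc
  rw [List.mem_reverse]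
  exact Multiset.mem_sort ..

private lemma coe_sortDesc (m : Multiset ℕ) : (↑(sortDesc m) : Multiset ℕ) = m := by
  unfold sortDesc
  rw [Multiset.coe_reverse]
  exact Multiset.sort_eq m _

private lemma sortDesc_sorted (m : Multiset ℕ) :
    (sortDesc m).Pairwise (fun u v : ℕ => v ≤ u) := by
  unfold sortDesc
  rw [List.pairwise_reverse]
  exact Multiset.pairwise_sort m _
private lemma core {lam : List ℕ} {T : ℕ × ℕ → Multiset ℕ}
    (hT1 : ∀ i j, InSD lam i j → T (i, j) ≠ 0 ∧ 0 ∉ T (i, j) ∧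
      ∀ v : ℕ, v ≠ 1 → (T (i, j)).count v ≤ 1)
    {a a' : ℕ} (ha : a = 1 ∧ a' = 2 ∨ a = 2 ∧ a' = 1)
    (h : ∃ p, p < (revrowWordM lam T).length ∧ (revrowWordM lam T).getD p 0 = a ∧
      ∀ q < p, (revrowWordM lam T).getD q 0 ≠ a')
    {b : ℕ × ℕ} (hb : b = ((revrowEntriesM lam T).getD (Nat.find h) ((0, 0), 0)).1) :
    InSD lam b.1 b.2 ∧ a ∈ T b ∧ (a = 1 → 2 ∉ T b) ∧
    (∀ i j, InSD lam i j → (i < b.1 ∨ (i = b.1 ∧ b.2 < j)) → ∀ v ∈ T (i, j), 3 ≤ v) ∧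
    ∃ Q R : List ((ℕ × ℕ) × ℕ),
      revrowEntriesM lam T = Q ++ (b, a) :: R ∧
      revrowEntriesM lam (Function.update T b (a' ::ₘ (T b).erase a)) = Q ++ (b, a') :: R ∧
      Q.length = Nat.find h ∧ (∀ e ∈ Q, 3 ≤ e.2) := by
  have hword : revrowWordM lam T = (revrowEntriesM lam T).map Prod.snd := rfl
  have hlenw : (revrowWordM lam T).length = (revrowEntriesM lam T).length := by
    rw [hword, List.length_map]
  obtain ⟨hp1, hp2, hp3⟩ := Nat.find_spec h
  set p := Nat.find h with hpdef
  have hval : ∀ q, q < (revrowEntriesM lam T).length →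
      (revrowWordM lam T).getD q 0 = ((revrowEntriesM lam T).getD q ((0, 0), 0)).2 := by
    intro q hq
    rw [hword, List.getD_eq_getElem _ _ (by rw [List.length_map]; exact hq),
      List.getD_eq_getElem _ _ hq, List.getElem_map]
  have hmem : ∀ e ∈ revrowEntriesM lam T, e.1 ∈ revrowBoxes lam ∧ e.2 ∈ T e.1 := by
    intro e he
    rw [revrowEntriesM_eq, List.mem_flatMap] at he
    obtain ⟨b', hb', hin⟩ := he
    rw [blockM, List.mem_map] at hin
    obtain ⟨v, hv, rfl⟩ := hin
    exact ⟨hb', mem_sortDesc.1 hv⟩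
  have hSD : ∀ b' : ℕ × ℕ, b' ∈ revrowBoxes lam → InSD lam b'.1 b'.2 := by
    intro b' hb'
    exact mem_revrowBoxes.1 hb'
  have hq3 : ∀ q < p, 3 ≤ (revrowWordM lam T).getD q 0 := by
    intro q hq
    have hqE : q < (revrowEntriesM lam T).length := by omega
    have hgd : (revrowEntriesM lam T).getD q ((0, 0), 0) ∈ revrowEntriesM lam T := by
      rw [List.getD_eq_getElem _ _ hqE]; exact List.getElem_mem hqE
    have hmemq := hmem _ hgd
    have hv := hval q hqE
    have hne1 : (revrowWordM lam T).getD q 0 ≠ a' := hp3 q hq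
    have hne2 : (revrowWordM lam T).getD q 0 ≠ a := by
      intro hcon
      exact Nat.find_min h hq ⟨by omega, hcon, fun q' hq' => hp3 q' (by omega)⟩
    have hne0 : (revrowWordM lam T).getD q 0 ≠ 0 := by
      intro hcon
      have h0 : (0 : ℕ) ∉ T ((revrowEntriesM lam T).getD q ((0, 0), 0)).1 :=
        (hT1 _ _ (hSD _ hmemq.1)).2.1
      rw [hv] at hcon
      have hm2 := hmemq.2
      rw [hcon] at hm2
      exact h0 hm2
    rcases ha with ⟨rfl, rfl⟩ | ⟨rfl, rfl⟩ <;> omega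
  obtain ⟨L1, b0, L2, q0, hsplit, hq0, hpeq⟩ :=
    flatMap_index (revrowBoxes lam) (blockM T) p (by rw [← revrowEntriesM_eq]; omega)
  have hq0' : q0 < (sortDesc (T b0)).length := by
    rw [blockM, List.length_map] at hq0; exact hq0
  have hEsplit : revrowEntriesM lam T
      = L1.flatMap (blockM T) ++ (blockM T b0 ++ L2.flatMap (blockM T)) := by
    rw [revrowEntriesM_eq, hsplit, List.flatMap_append, List.flatMap_cons]
  set P := L1.flatMap (blockM T) with hPdef
  have hPlen : p = P.length + q0 := hpeq
  have hgetmid : ∀ idx, idx < (sortDesc (T b0)).length →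
      (revrowEntriesM lam T).getD (P.length + idx) ((0, 0), 0)
        = (b0, (sortDesc (T b0)).getD idx 0) := by
    intro idx hidx
    rw [hEsplit, getD_middle _ _ _ (by rw [blockM, List.length_map]; exact hidx), blockM,
      List.getD_eq_getElem _ _ (by rw [List.length_map]; exact hidx), List.getElem_map,
      List.getD_eq_getElem _ _ hidx]
  have hbeq : b = b0 := by
    rw [hb, hPlen, hgetmid q0 hq0']
  subst hbeq
  have hElen : (revrowEntriesM lam T).length
      = P.length + ((sortDesc (T b)).length + (L2.flatMap (blockM T)).length) := by
    rw [hEsplit, List.length_append, List.length_append, blockM, List.length_map]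
  have hsa : (sortDesc (T b)).getD q0 0 = a := by
    have h1 := hval p (by omega)
    have h2 : (revrowEntriesM lam T).getD p ((0, 0), 0)
        = (b, (sortDesc (T b)).getD q0 0) := by
      rw [hPlen]; exact hgetmid q0 hq0'
    rw [h2] at h1
    have h1' : (revrowWordM lam T).getD p 0 = (sortDesc (T b)).getD q0 0 := h1
    exact h1'.symm.trans hp2
  have hmembox : b ∈ revrowBoxes lam := by
    rw [hsplit]; exact List.mem_append.2 (Or.inr List.mem_cons_self)
  have hbSD : InSD lam b.1 b.2 := hSD b hmembox
  have h0nb : (0 : ℕ) ∉ T b := (hT1 _ _ hbSD).2.1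
  have hcntb : ∀ v : ℕ, v ≠ 1 → (T b).count v ≤ 1 := fun v hv => (hT1 _ _ hbSD).2.2 v hv
  have hq0v : (sortDesc (T b))[q0] = a := by
    rw [← List.getD_eq_getElem _ 0 hq0']
    exact hsa
  have haT : a ∈ T b := by
    rw [← hq0v]
    exact mem_sortDesc.1 (List.getElem_mem hq0')
  have htk : ∀ idx, idx < q0 → 3 ≤ (sortDesc (T b)).getD idx 0 := by
    intro idx hidx
    have hlt : P.length + idx < (revrowEntriesM lam T).length := by omega
    have h1 := hval (P.length + idx) hlt
    rw [hgetmid idx (by omega)] at h1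
    have h2 := hq3 (P.length + idx) (by omega)
    rw [h1] at h2
    exact h2
  have hsorted := sortDesc_sorted (T b)
  have htail1 : ∀ z ∈ (sortDesc (T b)).drop (q0 + 1), z = 1 := by
    intro z hz
    obtain ⟨k, hk, rfl⟩ := List.getElem_of_mem hz
    rw [List.getElem_drop]
    have hklen : q0 + 1 + k < (sortDesc (T b)).length := by
      rw [List.length_drop] at hk; omega
    have hle : (sortDesc (T b))[q0 + 1 + k] ≤ (sortDesc (T b))[q0] := by
      rw [List.pairwise_iff_getElem] at hsorted
      exact hsorted q0 (q0 + 1 + k) hq0' hklen (by omega)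
    have hzmem : (sortDesc (T b))[q0 + 1 + k] ∈ T b :=
      mem_sortDesc.1 (List.getElem_mem hklen)
    have hz0 : (sortDesc (T b))[q0 + 1 + k] ≠ 0 := fun hcon => h0nb (hcon ▸ hzmem)
    by_contra hzne
    have ha2 : a = 2 := by
      rw [hq0v] at hle
      rcases ha with ⟨rfl, rfl⟩ | ⟨rfl, rfl⟩ <;> omega
    have hz2 : (sortDesc (T b))[q0 + 1 + k] = 2 := by
      rw [hq0v, ha2] at hle
      omega
    have hs0split : sortDesc (T b) = (sortDesc (T b)).take q0
        ++ (sortDesc (T b))[q0] :: (sortDesc (T b)).drop (q0 + 1) := by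
      conv_lhs => rw [← List.take_append_drop q0 (sortDesc (T b))]
      rw [List.drop_eq_getElem_cons hq0']
    have hmem2 : (2 : ℕ) ∈ (sortDesc (T b)).drop (q0 + 1) :=
      List.mem_iff_getElem.2 ⟨k, hk, by rw [List.getElem_drop]; exact hz2⟩
    have hcnt : 2 ≤ List.count 2 (sortDesc (T b)) := by
      conv_rhs => rw [hs0split]
      rw [List.count_append, List.count_cons, hq0v, ha2]
      have hpos2 : 0 < List.count 2 ((sortDesc (T b)).drop (q0 + 1)) :=
        List.count_pos_iff.2 hmem2
      simp only [beq_self_eq_true, if_true]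
      omega
    have hcnt' : 2 ≤ (T b).count 2 := by
      rw [← coe_sortDesc (T b), Multiset.coe_count]
      exact hcnt
    have := hcntb 2 (by omega)
    omega
  have hrep : (sortDesc (T b)).drop (q0 + 1)
      = List.replicate ((sortDesc (T b)).drop (q0 + 1)).length 1 :=
    List.eq_replicate_of_mem htail1
  set k0 := ((sortDesc (T b)).drop (q0 + 1)).length with hk0def
  have hs0 : sortDesc (T b) = (sortDesc (T b)).take q0 ++ a :: List.replicate k0 1 := by
    conv_lhs => rw [← List.take_append_drop q0 (sortDesc (T b)),
      List.drop_eq_getElem_cons hq0', hq0v, hrep]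
  have htake3 : ∀ v ∈ (sortDesc (T b)).take q0, 3 ≤ v := by
    intro v hv
    obtain ⟨i, hi, rfl⟩ := List.getElem_of_mem hv
    rw [List.getElem_take]
    have hiq : i < q0 := by rw [List.length_take] at hi; omega
    have := htk i hiq
    rw [List.getD_eq_getElem _ _ (by omega)] at this
    exact this
  have h2notin : a = 1 → (2 : ℕ) ∉ T b := by
    rintro rfl hcon
    rw [← mem_sortDesc (m := T b)] at hcon
    rw [hs0] at hcon
    rcases List.mem_append.1 hcon with hc | hc
    · exact absurd (htake3 2 hc) (by omega)
    · rcases List.mem_cons.1 hc with hc | hc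
      · omega
      · have := List.eq_of_mem_replicate hc; omega
  have hQ3P : ∀ e ∈ P, 3 ≤ e.2 := by
    intro e he
    obtain ⟨idx, hidx, rfl⟩ := List.getElem_of_mem he
    have hidxE : idx < (revrowEntriesM lam T).length := by omega
    have hEidx : (revrowEntriesM lam T).getD idx ((0, 0), 0) = P[idx] := by
      rw [hEsplit, List.getD_eq_getElem _ _ (by rw [← hEsplit]; exact hidxE)]
      exact List.getElem_append_left hidx
    have h3 := hq3 idx (by omega)
    rw [hval idx hidxE, hEidx] at h3
    exact h3
  have hbefore3 : ∀ b' ∈ L1, ∀ v ∈ T b', 3 ≤ v := by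
    intro b' hb' v hv
    have hmemP : ((b', v) : (ℕ × ℕ) × ℕ) ∈ P := by
      rw [hPdef, List.mem_flatMap]
      exact ⟨b', hb', by rw [blockM, List.mem_map]; exact ⟨v, mem_sortDesc.2 hv, rfl⟩⟩
    exact hQ3P _ hmemP
  have hbeforeSD : ∀ i j, InSD lam i j → (i < b.1 ∨ (i = b.1 ∧ b.2 < j)) →
      ∀ v ∈ T (i, j), 3 ≤ v := by
    intro i j hij hcond v hv
    have hmem' : (i, j) ∈ revrowBoxes lam := mem_revrowBoxes.2 hij
    rw [hsplit] at hmem'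
    rcases List.mem_append.1 hmem' with hm | hm
    · exact hbefore3 _ hm v hv
    · rcases List.mem_cons.1 hm with hm | hm
      · exfalso
        have h1 : i = b.1 := congrArg Prod.fst hm
        have h2 : j = b.2 := congrArg Prod.snd hm
        omega
      · exfalso
        have hpw := revrowBoxes_pairwise lam
        rw [hsplit, List.pairwise_append] at hpw
        have hcons := (List.pairwise_cons.1 hpw.2.1).1 _ hm
        rcases hcons with hlt | ⟨heq, hlt⟩
        · have hlt' : b.1 < i := hlt
          omega
        · have heq' : b.1 = i := heq
          have hlt' : j < b.2 := hlt
          omega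
  -- multiset computations
  have hcoeT : T b = ((((sortDesc (T b)).take q0 ++ a :: List.replicate k0 1 : List ℕ)) : Multiset ℕ) := by
    rw [← hs0, coe_sortDesc]
  have hmid : ∀ z : ℕ, ((((sortDesc (T b)).take q0 ++ z :: List.replicate k0 1 : List ℕ)) : Multiset ℕ)
      = z ::ₘ ((((sortDesc (T b)).take q0 ++ List.replicate k0 1 : List ℕ)) : Multiset ℕ) := by
    intro z
    rw [Multiset.cons_coe]
    exact Multiset.coe_eq_coe.2 List.perm_middle
  have herase : (T b).erase a
      = ((((sortDesc (T b)).take q0 ++ List.replicate k0 1 : List ℕ)) : Multiset ℕ) := by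
    conv_lhs => rw [hcoeT]
    rw [hmid a, Multiset.erase_cons_head]
  have hM' : a' ::ₘ (T b).erase a
      = ((((sortDesc (T b)).take q0 ++ a' :: List.replicate k0 1 : List ℕ)) : Multiset ℕ) := by
    rw [herase, hmid a', Multiset.cons_coe]
  have hsortednew : ((sortDesc (T b)).take q0 ++ a' :: List.replicate k0 1).Pairwise
      (fun u v : ℕ => v ≤ u) := by
    rw [List.pairwise_append]
    refine ⟨List.Pairwise.sublist (List.take_sublist _ _) hsorted, ?_, ?_⟩
    · rw [List.pairwise_cons]
      refine ⟨fun z hz => ?_, ?_⟩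
      · have := List.eq_of_mem_replicate hz
        rcases ha with ⟨rfl, rfl⟩ | ⟨rfl, rfl⟩ <;> omega
      · rw [List.pairwise_replicate]
        right; omega
    · intro z hz y hy
      have h3 := htake3 z hz
      have hy2 : y ≤ 2 := by
        rcases List.mem_cons.1 hy with rfl | hy
        · rcases ha with ⟨rfl, rfl⟩ | ⟨rfl, rfl⟩ <;> omega
        · have := List.eq_of_mem_replicate hy; omega
      omega
  haveI : IsAntisymm ℕ (fun u v : ℕ => v ≤ u) := ⟨fun _ _ h1 h2 => le_antisymm h2 h1⟩
  have hsortnew_eq : sortDesc (a' ::ₘ (T b).erase a)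
      = (sortDesc (T b)).take q0 ++ a' :: List.replicate k0 1 := by
    refine List.Perm.eq_of_pairwise' (sortDesc_sorted _) hsortednew ?_
    rw [← Multiset.coe_eq_coe, coe_sortDesc, hM']
  set U := Function.update T b (a' ::ₘ (T b).erase a) with hUdef
  have hbL : b ∉ L1 ∧ b ∉ L2 := by
    have hnd := revrowBoxes_nodup lam
    rw [hsplit, List.nodup_append] at hnd
    exact ⟨fun hc => hnd.2.2 b hc b List.mem_cons_self rfl,
      fun hc => (List.nodup_cons.1 hnd.2.1).1 hc⟩
  have hblockcong : ∀ L : List (ℕ × ℕ), b ∉ L →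
      L.flatMap (blockM U) = L.flatMap (blockM T) := by
    intro L hL
    rw [List.flatMap_def, List.flatMap_def]
    congr 1
    refine List.map_congr_left fun b' hb' => ?_
    rw [blockM, blockM, hUdef, Function.update_of_ne (fun hc => hL (by rw [← hc]; exact hb'))]
  have hblockbU : blockM U b
      = ((sortDesc (T b)).take q0).map (fun v => (b, v))
        ++ (b, a') :: (List.replicate k0 1).map (fun v => (b, v)) := by
    rw [blockM, hUdef, Function.update_self, hsortnew_eq, List.map_append, List.map_cons]
  have hblockbT : blockM T b
      = ((sortDesc (T b)).take q0).map (fun v => (b, v))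
        ++ (b, a) :: (List.replicate k0 1).map (fun v => (b, v)) := by
    rw [blockM]
    conv_lhs => rw [hs0]
    rw [List.map_append, List.map_cons]
  refine ⟨hbSD, haT, h2notin, hbeforeSD,
    P ++ ((sortDesc (T b)).take q0).map (fun v => (b, v)),
    (List.replicate k0 1).map (fun v => (b, v)) ++ L2.flatMap (blockM T), ?_, ?_, ?_, ?_⟩
  · rw [hEsplit, hblockbT]
    simp [List.append_assoc]
  · rw [revrowEntriesM_eq, hsplit, List.flatMap_append, List.flatMap_cons,
      hblockcong L1 hbL.1, hblockcong L2 hbL.2, hblockbU]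
    simp [List.append_assoc, hPdef]
  · rw [List.length_append, List.length_map, List.length_take]
    have hmin : min q0 (sortDesc (T b)).length = q0 := by omega
    rw [hmin]
    omega
  · intro e he
    rcases List.mem_append.1 he with he | he
    · exact hQ3P e he
    · rw [List.mem_map] at he
      obtain ⟨v, hv, rfl⟩ := he
      exact htake3 v hv
private lemma closureMDT {lam : List ℕ} {T : ℕ × ℕ → Multiset ℕ}
    (hT : IsMultisetDecompTab lam T)
    {a a' : ℕ} (ha : a = 1 ∧ a' = 2 ∨ a = 2 ∧ a' = 1)
    {b : ℕ × ℕ} (hbSD : InSD lam b.1 b.2) (haT : a ∈ T b) (h2T : a = 1 → (2 : ℕ) ∉ T b)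
    (hbef : ∀ i j, InSD lam i j → (i < b.1 ∨ (i = b.1 ∧ b.2 < j)) → ∀ v ∈ T (i, j), 3 ≤ v) :
    IsMultisetDecompTab lam (Function.update T b (a' ::ₘ (T b).erase a)) := by
  obtain ⟨hT1, hT2⟩ := hT
  have ha1 : a = 1 ∨ a = 2 := by
    rcases ha with ⟨rfl, rfl⟩ | ⟨rfl, rfl⟩
    exacts [Or.inl rfl, Or.inr rfl]
  have ha2 : a' = 1 ∨ a' = 2 := by
    rcases ha with ⟨rfl, rfl⟩ | ⟨rfl, rfl⟩
    exacts [Or.inr rfl, Or.inl rfl]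
  constructor
  · intro i j hij
    by_cases hc : ((i, j) : ℕ × ℕ) = b
    · rw [hc, Function.update_self]
      refine ⟨Multiset.cons_ne_zero, ?_, ?_⟩
      · intro h0
        rcases Multiset.mem_cons.1 h0 with h0 | h0
        · rcases ha with ⟨rfl, rfl⟩ | ⟨rfl, rfl⟩ <;> omega
        · exact (hT1 b.1 b.2 hbSD).2.1 (Multiset.mem_of_mem_erase h0)
      · intro v hv
        rw [Multiset.count_cons]
        have hce : ((T b).erase a).count v ≤ (T b).count v :=
          Multiset.count_le_of_le v (Multiset.erase_le _ _)
        have hcnt : (T b).count v ≤ 1 := (hT1 b.1 b.2 hbSD).2.2 v hv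
        by_cases hva : v = a'
        · subst hva
          rcases ha with ⟨rfl, rfl⟩ | ⟨rfl, rfl⟩
          · have h0 : (T b).count 2 = 0 := Multiset.count_eq_zero.2 (h2T rfl)
            rw [if_pos rfl]
            omega
          · exact absurd rfl hv
        · rw [if_neg hva]
          omega
    · rw [Function.update_of_ne hc]
      exact hT1 i j hij
  · intro d hd
    by_cases hdb : d b ∈ T b
    · refine hT2 d fun i j hij => ?_
      by_cases hc : ((i, j) : ℕ × ℕ) = b
      · rw [hc]; exact hdb
      · have := hd i j hij
        rwa [Function.update_of_ne hc] at this
    · have hdba : d b = a' := by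
        have hin' : d b ∈ Function.update T b (a' ::ₘ (T b).erase a) b := hd b.1 b.2 hbSD
        rw [Function.update_self] at hin'
        rcases Multiset.mem_cons.1 hin' with h1 | h1
        · exact h1
        · exact absurd (Multiset.mem_of_mem_erase h1) hdb
      have hd'dist : ∀ i j, InSD lam i j → Function.update d b a (i, j) ∈ T (i, j) := by
        intro i j hij
        by_cases hc : ((i, j) : ℕ × ℕ) = b
        · rw [hc, Function.update_self]
          exact haT
        · rw [Function.update_of_ne hc]
          have := hd i j hij
          rwa [Function.update_of_ne hc] at this
      have hDT := hT2 _ hd'dist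
      have hda : Function.update d b a (b.1, b.2) = a := Function.update_self b a d
      have hH : ∀ i j, InSD lam i j → (i < b.1 ∨ (i = b.1 ∧ b.2 < j)) →
          3 ≤ Function.update d b a (i, j) := by
        intro i j hij hcond
        have hc : ((i, j) : ℕ × ℕ) ≠ b := by
          intro hcon
          have h1 : i = b.1 := congrArg Prod.fst hcon
          have h2 : j = b.2 := congrArg Prod.snd hcon
          omega
        rw [Function.update_of_ne hc]
        have hmem := hd i j hij
        rw [Function.update_of_ne hc] at hmem
        exact hbef i j hij hcond _ hmem
      have hkey := key hDT hbSD hda ha1 ha2 hH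
      have heq : Function.update (Function.update d b a) (b.1, b.2) a' = d := by
        rw [show ((b.1 : ℕ), (b.2 : ℕ)) = b from rfl, Function.update_idem, ← hdba,
          Function.update_eq_self]
      rw [heq] at hkey
      exact hkey

private lemma transfer {lam : List ℕ} {T : ℕ × ℕ → Multiset ℕ}
    (hT1 : ∀ i j, InSD lam i j → T (i, j) ≠ 0 ∧ 0 ∉ T (i, j) ∧
      ∀ v : ℕ, v ≠ 1 → (T (i, j)).count v ≤ 1)
    {a a' : ℕ} (ha : a = 1 ∧ a' = 2 ∨ a = 2 ∧ a' = 1)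
    (h : ∃ p, p < (revrowWordM lam T).length ∧ (revrowWordM lam T).getD p 0 = a ∧
      ∀ q < p, (revrowWordM lam T).getD q 0 ≠ a')
    {b : ℕ × ℕ} (hb : b = ((revrowEntriesM lam T).getD (Nat.find h) ((0, 0), 0)).1)
    {U : ℕ × ℕ → Multiset ℕ} (hU : U = Function.update T b (a' ::ₘ (T b).erase a)) :
    ∃ h' : (∃ p, p < (revrowWordM lam U).length ∧ (revrowWordM lam U).getD p 0 = a' ∧
        ∀ q < p, (revrowWordM lam U).getD q 0 ≠ a),
      Function.update U (((revrowEntriesM lam U).getD (Nat.find h') ((0, 0), 0)).1)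
        (a ::ₘ (U (((revrowEntriesM lam U).getD (Nat.find h') ((0, 0), 0)).1)).erase a')
        = T := by
  obtain ⟨hbSD, haT, h2T, hbef, Q, R, hQR, hQR', hQlen, hQ3⟩ := core hT1 ha h hb
  subst hU
  set U := Function.update T b (a' ::ₘ (T b).erase a) with hUdef
  have hwU : revrowWordM lam U = Q.map Prod.snd ++ a' :: R.map Prod.snd := by
    rw [show revrowWordM lam U = (revrowEntriesM lam U).map Prod.snd from rfl, hQR',
      List.map_append, List.map_cons]
  have hQl : (Q.map Prod.snd).length = Nat.find h := by
    rw [List.length_map]; exact hQlen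
  have hq3 : ∀ q < Nat.find h, 3 ≤ (Q.map Prod.snd).getD q 0 := by
    intro q hq
    have hql : q < (Q.map Prod.snd).length := by omega
    rw [List.getD_eq_getElem _ _ hql, List.getElem_map]
    exact hQ3 _ (List.getElem_mem _)
  have hwitness : Nat.find h < (revrowWordM lam U).length ∧
      (revrowWordM lam U).getD (Nat.find h) 0 = a' ∧
      ∀ q < Nat.find h, (revrowWordM lam U).getD q 0 ≠ a := by
    refine ⟨?_, ?_, ?_⟩
    · rw [hwU, List.length_append, List.length_cons]
      omega
    · rw [hwU, ← hQl, getD_concat_eq]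
    · intro q hq
      rw [hwU, getD_concat_lt _ _ _ _ (by omega)]
      have := hq3 q hq
      rcases ha with ⟨rfl, rfl⟩ | ⟨rfl, rfl⟩ <;> omega
  have h' : ∃ p, p < (revrowWordM lam U).length ∧ (revrowWordM lam U).getD p 0 = a' ∧
      ∀ q < p, (revrowWordM lam U).getD q 0 ≠ a := ⟨Nat.find h, hwitness⟩
  refine ⟨h', ?_⟩
  have hfind : Nat.find h' = Nat.find h := by
    apply le_antisymm
    · exact Nat.find_min' h' hwitness
    · by_contra hcon
      push_neg at hcon
      obtain ⟨n, hn⟩ : ∃ n, Nat.find h' = n := ⟨_, rfl⟩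
      have hspec := Nat.find_spec h'
      have hval := hspec.2.1
      rw [hn] at hval hcon
      rw [hwU, getD_concat_lt _ _ _ _ (by omega)] at hval
      have h3 := hq3 _ hcon
      rcases ha with ⟨rfl, rfl⟩ | ⟨rfl, rfl⟩ <;> omega
  have hboxU : ((revrowEntriesM lam U).getD (Nat.find h') ((0, 0), 0)).1 = b := by
    rw [hfind, hQR', ← hQlen, getD_concat_eq]
  simp only [hboxU]
  have hUb : U b = a' ::ₘ (T b).erase a := Function.update_self b _ T
  rw [hUb, Multiset.erase_cons_head, Multiset.cons_erase haT]
  rw [hUdef, Function.update_idem, Function.update_eq_self]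
private lemma eStep {lam : List ℕ} (T U : ℕ × ℕ → Multiset ℕ)
    (hT : IsMultisetDecompTab lam T) (hEq : eStarBar lam T = some U) :
    IsMultisetDecompTab lam U ∧ fStarBar lam U = some T := by
  unfold eStarBar at hEq
  by_cases h : ∃ p, p < (revrowWordM lam T).length ∧ (revrowWordM lam T).getD p 0 = 2 ∧
      ∀ q < p, (revrowWordM lam T).getD q 0 ≠ 1
  · rw [dif_pos h] at hEq
    simp only [Option.some.injEq] at hEq
    subst hEq
    obtain ⟨hbSD, haT, h2T, hbef, -⟩ :=
      core hT.1 (Or.inr ⟨rfl, rfl⟩) h rfl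
    constructor
    · exact closureMDT hT (Or.inr ⟨rfl, rfl⟩) hbSD haT h2T hbef
    · obtain ⟨h', hfin⟩ := transfer hT.1 (Or.inr ⟨rfl, rfl⟩) h rfl rfl
      unfold fStarBar
      rw [dif_pos h']
      exact congrArg some hfin
  · rw [dif_neg h] at hEq
    exact absurd hEq (by simp)

private lemma fStep {lam : List ℕ} (T U : ℕ × ℕ → Multiset ℕ)
    (hT : IsMultisetDecompTab lam T) (hEq : fStarBar lam T = some U) :
    IsMultisetDecompTab lam U ∧ eStarBar lam U = some T := by
  unfold fStarBar at hEq
  by_cases h : ∃ p, p < (revrowWordM lam T).length ∧ (revrowWordM lam T).getD p 0 = 1 ∧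
      ∀ q < p, (revrowWordM lam T).getD q 0 ≠ 2
  · rw [dif_pos h] at hEq
    simp only [Option.some.injEq] at hEq
    subst hEq
    obtain ⟨hbSD, haT, h2T, hbef, -⟩ :=
      core hT.1 (Or.inl ⟨rfl, rfl⟩) h rfl
    constructor
    · exact closureMDT hT (Or.inl ⟨rfl, rfl⟩) hbSD haT h2T hbef
    · obtain ⟨h', hfin⟩ := transfer hT.1 (Or.inl ⟨rfl, rfl⟩) h rfl rfl
      unfold eStarBar
      rw [dif_pos h']
      exact congrArg some hfin
  · rw [dif_neg h] at hEq
    exact absurd hEq (by simp)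
/-- the operators `e*_1̄` and `f*_1̄` define maps
`SetDecTab*(λ) → SetDecTab*(λ) ⊔ {0}`, and `e*_1̄(T) = U` iff `T = f*_1̄(U)`. -/
theorem stmt1 (lam : List ℕ) (hlam : IsStrictPartition lam) :
    (∀ T : ℕ × ℕ → Multiset ℕ, IsMultisetDecompTab lam T →
      ∀ U, eStarBar lam T = some U → IsMultisetDecompTab lam U) ∧
    (∀ T : ℕ × ℕ → Multiset ℕ, IsMultisetDecompTab lam T →
      ∀ U, fStarBar lam T = some U → IsMultisetDecompTab lam U) ∧
    (∀ T U : ℕ × ℕ → Multiset ℕ, IsMultisetDecompTab lam T → IsMultisetDecompTab lam U →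
      (eStarBar lam T = some U ↔ fStarBar lam U = some T)) := by
  exact ⟨fun T hT U hEq => (eStep T U hT hEq).1,
    fun T hT U hEq => (fStep T U hT hEq).1,
    fun T U hT hU =>
      ⟨fun hEq => (eStep T U hT hEq).2, fun hEq => (fStep U T hU hEq).2⟩⟩
end
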